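/- A countable past-finite partial order a is rogue if and only if a has a level containing infinitely many non-maximal elements. (Corollary: Θ = Γ.) -/

import Mathlib

/-- A poset (given by its order relation `le`) is *past-finite* if the past
`{y | y ≤ x}` of every element `x` is finite. -/
def PastFinite {α : Type} (le : α → α → Prop) : Prop := ∀ x : α, {y : α | le y x}.Finite

/-- The finite poset `s` on `Fin n` *is a stem in* the poset `(α, le)`: there is an
order-embedding of `s` into `(α, le)` whose image is a down-closed (lower) set. -/
def IsStemIn {α : Type} {n : ℕ} (s : Fin n → Fin n → Prop) (le : α → α → Prop) : Prop :=
  ∃ f : Fin n → α, Function.Injective f ∧ (∀ i j, s i j ↔ le (f i) (f j)) ∧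
    ∀ (x : α) (j : Fin n), le x (f j) → ∃ i, f i = x

/-- Two posets *have the same stems* if every finite poset is a stem in one iff it is a
stem in the other (every finite poset is isomorphic to one on some `Fin n`). -/
def SameStems {α β : Type} (le₁ : α → α → Prop) (le₂ : β → β → Prop) : Prop :=
  ∀ (n : ℕ) (s : Fin n → Fin n → Prop), IsStemIn s le₁ ↔ IsStemIn s le₂

/-- The posets `(α, le₁)` and `(β, le₂)` are order-isomorphic. -/
def OrderIsoRel {α β : Type} (le₁ : α → α → Prop) (le₂ : β → β → Prop) : Prop :=
  ∃ e : α ≃ β, ∀ x y : α, le₁ x y ↔ le₂ (e x) (e y)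

/-- Strict order relation associated to `le` (in a partial order). -/
def LtRel {α : Type} (le : α → α → Prop) (x y : α) : Prop := le x y ∧ x ≠ y

/-- `x` is maximal: no element lies strictly above it. -/
def IsMaximalRel {α : Type} (le : α → α → Prop) (x : α) : Prop := ∀ y, le x y → y = x

/-- There is a chain `x₀ < x₁ < ⋯ < x_k = x` (of length `k`) with top element `x`. -/
def ChainTo {α : Type} (le : α → α → Prop) (x : α) (k : ℕ) : Prop :=
  ∃ f : Fin (k + 1) → α, (∀ i j : Fin (k + 1), i < j → LtRel le (f i) (f j)) ∧ f (Fin.last k) = x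

/-- `x` has level `k`: `k` is the maximum length of a chain with top element `x`. -/
def HasLevel {α : Type} (le : α → α → Prop) (x : α) (k : ℕ) : Prop :=
  ChainTo le x k ∧ ∀ m, ChainTo le x m → m ≤ k

/-- A causet (countable past-finite partial order) is *rogue* if there exists a causet
not order-isomorphic to it having the same stems. -/
def IsRogueRel {α : Type} (le : α → α → Prop) : Prop :=
  ∃ (β : Type) (le' : β → β → Prop), IsPartialOrder β le' ∧ Countable β ∧ PastFinite le' ∧
    ¬ OrderIsoRel le le' ∧ SameStems le le'

open Set

namespace Rogue
variable {α : Type} {β : Type}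

section Basic
variable (le : α → α → Prop)

def past (x : α) : Set α := {y | le y x}
def spast (x : α) : Set α := {y | le y x ∧ y ≠ x}
def DownClosed (S : Set α) : Prop := ∀ ⦃x y : α⦄, le x y → y ∈ S → x ∈ S
noncomputable def lvl (x : α) : ℕ := sSup {k | ChainTo le x k}

/-- the key invariant set: maximal elements whose exact strict past carries
infinitely many non-maximal elements. -/
def Mstar : Set α :=
  {m | IsMaximalRel le m ∧ {y | ¬ IsMaximalRel le y ∧ spast le y = spast le m}.Infinite}

variable {le}

theorem lerefl (hpo : IsPartialOrder α le) (x : α) : le x x :=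
  hpo.toIsPreorder.toRefl.refl x

theorem letrans (hpo : IsPartialOrder α le) {x y z : α} (h1 : le x y) (h2 : le y z) :
    le x z := hpo.toIsPreorder.toIsTrans.trans _ _ _ h1 h2

theorem leantisymm (hpo : IsPartialOrder α le) {x y : α} (h1 : le x y) (h2 : le y x) :
    x = y := hpo.toAntisymm.antisymm _ _ h1 h2

theorem ltrel_trans_le (hpo : IsPartialOrder α le) {x y z : α} (h1 : LtRel le x y)
    (h2 : le y z) : LtRel le x z := by
  refine ⟨letrans hpo h1.1 h2, ?_⟩
  rintro rfl
  exact h1.2 (leantisymm hpo h1.1 h2)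

theorem le_trans_ltrel (hpo : IsPartialOrder α le) {x y z : α} (h1 : le x y)
    (h2 : LtRel le y z) : LtRel le x z := by
  refine ⟨letrans hpo h1 h2.1, ?_⟩
  rintro rfl
  exact h2.2 (leantisymm hpo h2.1 h1)

theorem mem_spast {x y : α} : y ∈ spast le x ↔ LtRel le y x := Iff.rfl

theorem not_max_of_ltrel {x y : α} (h : LtRel le x y) : ¬ IsMaximalRel le x := by
  intro hm; exact h.2 ((hm y h.1).symm ▸ rfl)

theorem not_max_iff {x : α} : ¬ IsMaximalRel le x ↔ ∃ y, LtRel le x y := by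
  constructor
  · intro h
    by_contra hc
    push_neg at hc
    exact h (fun y hy => by
      by_contra hne
      exact hc y ⟨hy, fun he => hne he.symm⟩)
  · rintro ⟨y, hy⟩; exact not_max_of_ltrel hy

theorem spast_subset_nonmax {x : α} : spast le x ⊆ {y | ¬ IsMaximalRel le y} := by
  intro y hy; exact not_max_of_ltrel hy

theorem chainTo_zero (hpo : IsPartialOrder α le) (x : α) : ChainTo le x 0 := by
  refine ⟨fun _ => x, ?_, rfl⟩
  intro i j hij
  have h1 := i.isLt; have h2 := j.isLt
  have := Fin.lt_def.mp hij
  omega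

theorem chainTo_succ (hpo : IsPartialOrder α le) {x y : α} {k : ℕ} (hxy : LtRel le y x)
    (hy : ChainTo le y k) : ChainTo le x (k + 1) := by
  obtain ⟨f, hf, hl⟩ := hy
  refine ⟨Fin.snoc f x, ?_, by simp⟩
  intro i j hij
  rcases Fin.eq_castSucc_or_eq_last j with ⟨j', rfl⟩ | rfl
  · rcases Fin.eq_castSucc_or_eq_last i with ⟨i', rfl⟩ | rfl
    · simp only [Fin.snoc_castSucc]
      exact hf i' j' (by exact_mod_cast hij)
    · exact absurd hij (by have := j'.isLt; rw [Fin.lt_def]; simp only [Fin.val_last, Fin.coe_castSucc]; omega)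
  · rcases Fin.eq_castSucc_or_eq_last i with ⟨i', rfl⟩ | rfl
    · simp only [Fin.snoc_castSucc, Fin.snoc_last]
      rcases eq_or_ne i' (Fin.last k) with rfl | hne
      · rw [hl]; exact hxy
      · have : LtRel le (f i') y := hl ▸ hf i' (Fin.last k) (Fin.lt_last_iff_ne_last.mpr hne)
        exact ltrel_trans_le hpo this hxy.1
    · exact absurd hij (lt_irrefl _)

theorem chainTo_pred (hpo : IsPartialOrder α le) {x : α} {k : ℕ}
    (h : ChainTo le x (k + 1)) : ∃ y, LtRel le y x ∧ ChainTo le y k := by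
  obtain ⟨f, hf, hl⟩ := h
  refine ⟨f (Fin.castSucc (Fin.last k)), ?_, f ∘ Fin.castSucc, ?_, rfl⟩
  · rw [← hl]
    exact hf _ _ (by simp [Fin.lt_def])
  · intro i j hij
    exact hf _ _ (by exact_mod_cast hij)

theorem chainTo_mem_past (hpo : IsPartialOrder α le) {x : α} {k : ℕ}
    {f : Fin (k+1) → α} (hf : ∀ i j : Fin (k+1), i < j → LtRel le (f i) (f j))
    (hl : f (Fin.last k) = x) (i : Fin (k+1)) : le (f i) x := by
  rcases eq_or_ne i (Fin.last k) with rfl | hne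
  · rw [hl]; exact lerefl hpo x
  · rw [← hl]; exact (hf i (Fin.last k) (Fin.lt_last_iff_ne_last.mpr hne)).1

theorem chainTo_bound (hpo : IsPartialOrder α le) (hpf : PastFinite le) {x : α} {k : ℕ}
    (h : ChainTo le x k) : k < Nat.card (past le x) := by
  obtain ⟨f, hf, hl⟩ := h
  have hinj : Function.Injective f := by
    intro i j hij
    by_contra hne
    rcases lt_or_gt_of_ne hne with h' | h'
    · exact (hf i j h').2 hij
    · exact (hf j i h').2 hij.symm
  have hinj2 : Function.Injective (fun i : Fin (k+1) =>
      (⟨f i, chainTo_mem_past hpo hf hl i⟩ : past le x)) := by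
    intro i j hij
    exact hinj (congrArg Subtype.val hij)
  haveI : Finite (past le x) := (hpf x).to_subtype
  have hle := Nat.card_le_card_of_injective _ hinj2
  simpa using hle

theorem hasLevel_lvl (hpo : IsPartialOrder α le) (hpf : PastFinite le) (x : α) :
    HasLevel le x (lvl le x) := by
  have hne : {k | ChainTo le x k}.Nonempty := ⟨0, chainTo_zero hpo x⟩
  have hbdd : BddAbove {k | ChainTo le x k} :=
    ⟨Nat.card (past le x), fun k hk => le_of_lt (chainTo_bound hpo hpf hk)⟩
  exact ⟨Nat.sSup_mem hne hbdd, fun m hm => le_csSup hbdd hm⟩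

theorem hasLevel_unique {x : α} {k m : ℕ} (h1 : HasLevel le x k) (h2 : HasLevel le x m) :
    k = m := le_antisymm (h2.2 _ h1.1) (h1.2 _ h2.1)

theorem hasLevel_iff_lvl (hpo : IsPartialOrder α le) (hpf : PastFinite le) {x : α} {k : ℕ} :
    HasLevel le x k ↔ lvl le x = k :=
  ⟨fun h => hasLevel_unique (hasLevel_lvl hpo hpf x) h,
   fun h => h ▸ hasLevel_lvl hpo hpf x⟩

theorem lvl_lt_of_ltrel (hpo : IsPartialOrder α le) (hpf : PastFinite le) {x y : α}
    (h : LtRel le y x) : lvl le y < lvl le x := by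
  have h1 := (hasLevel_lvl hpo hpf y).1
  have := (hasLevel_lvl hpo hpf x).2 _ (chainTo_succ hpo h h1)
  omega

theorem lvl_mono (hpo : IsPartialOrder α le) (hpf : PastFinite le) {x y : α}
    (h : le y x) : lvl le y ≤ lvl le x := by
  rcases eq_or_ne y x with rfl | hne
  · exact le_rfl
  · exact le_of_lt (lvl_lt_of_ltrel hpo hpf ⟨h, hne⟩)

theorem lvl_le_of_spast_bound (hpo : IsPartialOrder α le) (hpf : PastFinite le) {x : α} {n : ℕ}
    (h : ∀ z, LtRel le z x → lvl le z < n) : lvl le x ≤ n := by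
  rcases Nat.eq_zero_or_eq_succ_pred (lvl le x) with h0 | hs
  · omega
  · set t := lvl le x - 1
    have hc : ChainTo le x (t + 1) := by
      have : t + 1 = lvl le x := by omega
      rw [this]; exact (hasLevel_lvl hpo hpf x).1
    obtain ⟨y, hyx, hy⟩ := chainTo_pred hpo hc
    have ht : t ≤ lvl le y := (hasLevel_lvl hpo hpf y).2 _ hy
    have := h y hyx
    omega

theorem lvl_eq_of_spast_eq (hpo : IsPartialOrder α le) (hpf : PastFinite le) {x y : α}
    (h : spast le x = spast le y) : lvl le x = lvl le y := by
  have key : ∀ u v : α, spast le u = spast le v → lvl le u ≤ lvl le v := by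
    intro u v huv
    rcases Nat.eq_zero_or_eq_succ_pred (lvl le u) with h0 | hs
    · omega
    · apply lvl_le_of_spast_bound hpo hpf
      intro z hz
      have : z ∈ spast le v := huv ▸ hz
      exact lvl_lt_of_ltrel hpo hpf this
  exact le_antisymm (key x y h) (key y x h.symm)

theorem past_downClosed (hpo : IsPartialOrder α le) (x : α) : DownClosed le (past le x) :=
  fun _ _ h1 h2 => letrans hpo h1 h2

def dcl (le : α → α → Prop) (S : Set α) : Set α := ⋃ x ∈ S, past le x

theorem subset_dcl (hpo : IsPartialOrder α le) (S : Set α) : S ⊆ dcl le S := by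
  intro x hx
  exact Set.mem_biUnion hx (lerefl hpo x)

theorem dcl_downClosed (hpo : IsPartialOrder α le) (S : Set α) : DownClosed le (dcl le S) := by
  intro x y hxy hy
  obtain ⟨z, hz, hyz⟩ := Set.mem_iUnion₂.mp hy
  exact Set.mem_biUnion hz (letrans hpo hxy hyz)

theorem dcl_finite (hpf : PastFinite le) {S : Set α} (hS : S.Finite) : (dcl le S).Finite :=
  Set.Finite.biUnion hS (fun x _ => hpf x)

theorem spast_subset_of_downClosed (hpo : IsPartialOrder α le) {T : Set α}
    (hT : DownClosed le T) {x : α} (hx : x ∈ T) : spast le x ⊆ T :=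
  fun _ hz => hT hz.1 hx

end Basic

section Stems
variable {le₁ : α → α → Prop} {le₂ : β → β → Prop}

/-- `g` embeds the down-closed set `T` of `(α,le₁)` into `(β,le₂)` with down-closed image. -/
structure StemEmb (le₁ : α → α → Prop) (le₂ : β → β → Prop) (T : Set α) (g : T → β) : Prop where
  inj : Function.Injective g
  iso : ∀ x y : T, le₁ x.val y.val ↔ le₂ (g x) (g y)
  dc : ∀ u : β, ∀ y : T, le₂ u (g y) → ∃ x : T, g x = u

theorem sameStems_transfer (h : SameStems le₁ le₂) {T : Set α}
    (hT : T.Finite) (hd : DownClosed le₁ T) : ∃ g : T → β, StemEmb le₁ le₂ T g := by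
  haveI := hT.fintype
  set e := Fintype.equivFin T with he
  set n := Fintype.card T
  set s : Fin n → Fin n → Prop := fun i j => le₁ (e.symm i).val (e.symm j).val with hs
  have h1 : IsStemIn s le₁ := by
    refine ⟨fun i => (e.symm i).val, ?_, fun i j => Iff.rfl, ?_⟩
    · exact Subtype.coe_injective.comp e.symm.injective
    · intro x j hxj
      have hxT : x ∈ T := hd hxj (e.symm j).2
      exact ⟨e ⟨x, hxT⟩, by simp⟩
  obtain ⟨f₂, hinj, hiso, hdc⟩ := (h n s).mp h1
  refine ⟨f₂ ∘ e, ⟨hinj.comp e.injective, ?_, ?_⟩⟩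
  · intro x y
    have : le₁ x.val y.val ↔ s (e x) (e y) := by simp [hs]
    rw [this]
    exact hiso (e x) (e y)
  · intro u y hu
    obtain ⟨i, hi⟩ := hdc u (e y) hu
    exact ⟨e.symm i, by simpa using hi⟩

variable {T : Set α} {g : T → β}

theorem StemEmb.ltrel_iff (hg : StemEmb le₁ le₂ T g) (x y : T) :
    LtRel le₁ x.val y.val ↔ LtRel le₂ (g x) (g y) := by
  unfold LtRel
  rw [hg.iso x y]
  have : x.val ≠ y.val ↔ g x ≠ g y := by
    constructor
    · intro hne he
      exact hne (congrArg Subtype.val (hg.inj he))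
    · intro hne he
      exact hne (congrArg g (Subtype.ext he))
  tauto

theorem StemEmb.spast_image (hg : StemEmb le₁ le₂ T g) (x : T) :
    spast le₂ (g x) = g '' {y : T | y.val ∈ spast le₁ x.val} := by
  ext u
  constructor
  · rintro ⟨hu1, hu2⟩
    obtain ⟨y, rfl⟩ := hg.dc u x hu1
    refine ⟨y, ?_, rfl⟩
    have : LtRel le₂ (g y) (g x) := ⟨hu1, hu2⟩
    exact (hg.ltrel_iff y x).mpr this
  · rintro ⟨y, hy, rfl⟩
    exact (hg.ltrel_iff y x).mp hy

theorem StemEmb.spast_eq_iff (hd : DownClosed le₁ T) (hg : StemEmb le₁ le₂ T g) (x₁ x₂ : T) :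
    spast le₁ x₁.val = spast le₁ x₂.val ↔ spast le₂ (g x₁) = spast le₂ (g x₂) := by
  rw [hg.spast_image x₁, hg.spast_image x₂]
  constructor
  · intro h; rw [h]
  · intro h
    have himg : {y : T | y.val ∈ spast le₁ x₁.val} = {y : T | y.val ∈ spast le₁ x₂.val} :=
      Set.image_injective.mpr hg.inj h
    ext z
    constructor
    · intro hz
      have hzT : z ∈ T := hd hz.1 x₁.2
      have : (⟨z, hzT⟩ : T) ∈ {y : T | y.val ∈ spast le₁ x₁.val} := hz
      rw [himg] at this
      exact this
    · intro hz
      have hzT : z ∈ T := hd hz.1 x₂.2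
      have : (⟨z, hzT⟩ : T) ∈ {y : T | y.val ∈ spast le₁ x₂.val} := hz
      rw [← himg] at this
      exact this

theorem StemEmb.chainTo_iff (hpo₁ : IsPartialOrder α le₁) (hpo₂ : IsPartialOrder β le₂)
    (hd : DownClosed le₁ T) (hg : StemEmb le₁ le₂ T g) (x : T) (k : ℕ) :
    ChainTo le₁ x.val k ↔ ChainTo le₂ (g x) k := by
  constructor
  · rintro ⟨f, hf, hl⟩
    have hfT : ∀ i, f i ∈ T := by
      intro i
      exact hd (chainTo_mem_past hpo₁ hf hl i) x.2
    refine ⟨fun i => g ⟨f i, hfT i⟩, ?_, ?_⟩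
    · intro i j hij
      exact (hg.ltrel_iff _ _).mp (hf i j hij)
    · show g ⟨f (Fin.last k), hfT _⟩ = g x
      congr 1
      exact Subtype.ext hl
  · rintro ⟨f, hf, hl⟩
    have hfi : ∀ i, ∃ y : T, g y = f i := by
      intro i
      exact hg.dc (f i) x (chainTo_mem_past hpo₂ hf hl i)
    choose F hF using hfi
    refine ⟨fun i => (F i).val, ?_, ?_⟩
    · intro i j hij
      apply (hg.ltrel_iff (F i) (F j)).mpr
      rw [hF i, hF j]
      exact hf i j hij
    · have : g (F (Fin.last k)) = g x := by rw [hF]; exact hl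
      exact congrArg Subtype.val (hg.inj this)


theorem StemEmb.lvl_eq (hpo₁ : IsPartialOrder α le₁) (hpo₂ : IsPartialOrder β le₂)
    (hd : DownClosed le₁ T) (hg : StemEmb le₁ le₂ T g) (x : T) : lvl le₂ (g x) = lvl le₁ x.val := by
  unfold lvl
  congr 1
  ext k
  exact (hg.chainTo_iff hpo₁ hpo₂ hd x k).symm

theorem StemEmb.not_max_of_witness (hg : StemEmb le₁ le₂ T g) (x z : T) (hxz : LtRel le₁ x.val z.val) :
    ¬ IsMaximalRel le₂ (g x) :=
  not_max_of_ltrel ((hg.ltrel_iff x z).mp hxz)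

end Stems

section Replace
variable {le : α → α → Prop}

/-- Replacement: in a stem witness, a maximal element can be replaced by any fresh
element with the same exact strict past. -/
theorem stem_replace (hpo : IsPartialOrder α le) {n : ℕ} {s : Fin n → Fin n → Prop}
    {f : Fin n → α} (hinj : Function.Injective f)
    (hiso : ∀ i j, s i j ↔ le (f i) (f j))
    (hdc : ∀ (x : α) (j : Fin n), le x (f j) → ∃ i, f i = x)
    (j₀ : Fin n) (hmax : IsMaximalRel le (f j₀)) {y : α}
    (hy1 : y ∉ Set.range f) (hy2 : spast le y = spast le (f j₀)) :
    Function.Injective (Function.update f j₀ y) ∧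
    (∀ i j, s i j ↔ le (Function.update f j₀ y i) (Function.update f j₀ y j)) ∧
    (∀ (x : α) (j : Fin n), le x (Function.update f j₀ y j) → ∃ i, Function.update f j₀ y i = x) := by
  set f' := Function.update f j₀ y with hf'
  have hne : ∀ i, y ≠ f i := by
    intro i he
    exact hy1 ⟨i, he.symm⟩
  have hup : ∀ i, i ≠ j₀ → f' i = f i := fun i hi => Function.update_of_ne hi y f
  have hupj : f' j₀ = y := Function.update_self j₀ y f
  have hA : ∀ i, i ≠ j₀ → (le (f i) y ↔ le (f i) (f j₀)) := by
    intro i hi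
    constructor
    · intro h
      have h2 : f i ∈ spast le y := ⟨h, (hne i).symm⟩
      exact ((hy2 ▸ h2 : f i ∈ spast le (f j₀))).1
    · intro h
      have hne2 : f i ≠ f j₀ := fun he => hi (hinj he)
      have h2 : f i ∈ spast le (f j₀) := ⟨h, hne2⟩
      exact ((hy2.symm ▸ h2 : f i ∈ spast le y)).1
  have hB : ∀ i, i ≠ j₀ → (¬ le y (f i) ∧ ¬ le (f j₀) (f i)) := by
    intro i hi
    constructor
    · intro h
      obtain ⟨i', hi'⟩ := hdc y i h
      exact hne i' hi'.symm
    · intro h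
      exact hi.symm (hinj (hmax (f i) h)).symm
  refine ⟨?_, ?_, ?_⟩
  · intro i j hij
    by_cases hi : i = j₀ <;> by_cases hj : j = j₀
    · rw [hi, hj]
    · rw [hi, hupj, hup j hj] at hij
      exact absurd hij (hne j)
    · rw [hj, hupj, hup i hi] at hij
      exact absurd hij.symm (hne i)
    · rw [hup i hi, hup j hj] at hij
      exact hinj hij
  · intro i j
    by_cases hi : i = j₀ <;> by_cases hj : j = j₀
    · rw [hi, hj, hupj, hiso j₀ j₀]
      exact ⟨fun _ => lerefl hpo y, fun _ => lerefl hpo (f j₀)⟩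
    · rw [hi, hupj, hup j hj, hiso j₀ j]
      exact ⟨fun h => absurd h (hB j hj).2, fun h => absurd h (hB j hj).1⟩
    · rw [hj, hupj, hup i hi, hiso i j₀]
      exact (hA i hi).symm
    · rw [hup i hi, hup j hj]
      exact hiso i j
  · intro x j hxj
    by_cases hj : j = j₀
    · rw [hj, hupj] at hxj
      rcases eq_or_ne x y with rfl | hxy
      · exact ⟨j₀, hupj⟩
      · have hsp : x ∈ spast le (f j₀) := hy2 ▸ ⟨hxj, hxy⟩
        obtain ⟨i, hi⟩ := hdc x j₀ hsp.1
        have hij : i ≠ j₀ := by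
          rintro rfl
          exact hsp.2 hi.symm
        exact ⟨i, by rw [hup i hij, hi]⟩
    · rw [hup j hj] at hxj
      obtain ⟨i, hi⟩ := hdc x j hxj
      have hij : i ≠ j₀ := by
        rintro rfl
        rw [← hi] at hxj
        exact hj (hinj (hmax (f j) hxj))
      exact ⟨i, by rw [hup i hij, hi]⟩

end Replace

section EasyDir
variable {le : α → α → Prop}

theorem exists_common_spast (hpo : IsPartialOrder α le) (hpf : PastFinite le)
    (h : ∃ k, {x : α | HasLevel le x k ∧ ¬ IsMaximalRel le x}.Infinite) :
    ∃ D : Set α, {x : α | ¬ IsMaximalRel le x ∧ spast le x = D}.Infinite := by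
  classical
  have hP : ∃ k, {x : α | HasLevel le x k ∧ ¬ IsMaximalRel le x}.Infinite := h
  set k₀ := Nat.find hP with hk₀def
  have hk₀ : {x : α | HasLevel le x k₀ ∧ ¬ IsMaximalRel le x}.Infinite := Nat.find_spec hP
  have hmin : ∀ j < k₀, ¬ {x : α | HasLevel le x j ∧ ¬ IsMaximalRel le x}.Infinite :=
    fun j hj => Nat.find_min hP hj
  set F := {y : α | ¬ IsMaximalRel le y ∧ lvl le y < k₀} with hFdef
  have hF : F.Finite := by
    have hcov : F ⊆ ⋃ j ∈ Finset.range k₀, {x : α | HasLevel le x j ∧ ¬ IsMaximalRel le x} := by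
      intro y hy
      refine Set.mem_biUnion (Finset.mem_range.mpr hy.2) ?_
      exact ⟨hasLevel_lvl hpo hpf y, hy.1⟩
    refine Set.Finite.subset (Set.Finite.biUnion (Finset.range k₀).finite_toSet ?_) hcov
    intro j hj
    exact Set.not_infinite.mp (hmin j (Finset.mem_range.mp hj))
  by_contra hno
  push_neg at hno
  apply hk₀
  have hcov : {x : α | HasLevel le x k₀ ∧ ¬ IsMaximalRel le x} ⊆
      ⋃ E ∈ {E : Set α | E ⊆ F}, {x : α | ¬ IsMaximalRel le x ∧ spast le x = E} := by
    intro x hx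
    have hxl : lvl le x = k₀ := (hasLevel_iff_lvl hpo hpf).mp hx.1
    have hsub : spast le x ⊆ F := by
      intro z hz
      exact ⟨not_max_of_ltrel hz, hxl ▸ lvl_lt_of_ltrel hpo hpf hz⟩
    exact Set.mem_biUnion hsub ⟨hx.2, rfl⟩
  refine Set.Finite.subset (Set.Finite.biUnion hF.finite_subsets ?_) hcov
  intro E _
  exact hno E

theorem orderIso_mstar {le₂ : β → β → Prop} (h : OrderIsoRel le le₂) :
    ∃ e : α ≃ β, e '' Mstar le = Mstar le₂ := by
  obtain ⟨e, he⟩ := h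
  have hmax : ∀ x : α, IsMaximalRel le x ↔ IsMaximalRel le₂ (e x) := by
    intro x
    constructor
    · intro hm u hu
      have h3 : le x (e.symm u) := by
        rw [he]; simpa using hu
      have := hm _ h3
      rw [← this]; simp
    · intro hm u hu
      have : le₂ (e x) (e u) := (he x u).mp hu
      exact e.injective (hm _ this)
  have hspast : ∀ x : α, spast le₂ (e x) = e '' spast le x := by
    intro x
    ext u
    constructor
    · rintro ⟨h1, h2⟩
      refine ⟨e.symm u, ⟨?_, ?_⟩, by simp⟩
      · rw [he]; simpa using h1
      · intro hc
        exact h2 (by rw [← hc]; simp)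
    · rintro ⟨y, ⟨h1, h2⟩, rfl⟩
      exact ⟨(he y x).mp h1, fun hc => h2 (e.injective hc)⟩
  have hfib : ∀ m : α, {y : β | ¬ IsMaximalRel le₂ y ∧ spast le₂ y = spast le₂ (e m)} =
      e '' {y : α | ¬ IsMaximalRel le y ∧ spast le y = spast le m} := by
    intro m
    ext u
    constructor
    · rintro ⟨h1, h2⟩
      refine ⟨e.symm u, ⟨?_, ?_⟩, by simp⟩
      · intro hc
        apply h1
        rw [show u = e (e.symm u) by simp]
        exact (hmax _).mp hc
      · have : spast le₂ (e (e.symm u)) = spast le₂ (e m) := by simpa using h2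
        rw [hspast, hspast] at this
        exact Set.image_injective.mpr e.injective this
    · rintro ⟨y, ⟨h1, h2⟩, rfl⟩
      refine ⟨fun hc => h1 ((hmax y).mpr hc), ?_⟩
      rw [hspast, hspast, h2]
  refine ⟨e, ?_⟩
  ext u
  constructor
  · rintro ⟨m, ⟨hm1, hm2⟩, rfl⟩
    refine ⟨(hmax m).mp hm1, ?_⟩
    rw [hfib m]
    exact hm2.image e.injective.injOn
  · rintro ⟨h1, h2⟩
    refine ⟨e.symm u, ⟨?_, ?_⟩, by simp⟩
    · rw [hmax (e.symm u)]; simpa using h1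
    · have h2' : {y : β | ¬ IsMaximalRel le₂ y ∧ spast le₂ y = spast le₂ (e (e.symm u))}.Infinite := by
        simpa using h2
      rw [hfib (e.symm u)] at h2'
      exact h2'.of_image
end EasyDir

section CaseA
variable {le : α → α → Prop}

theorem mstar_subset_max : Mstar le ⊆ {x | IsMaximalRel le x} := fun _ h => h.1

open scoped Classical in
/-- any stem witness can be purged of elements of `Mstar`. -/
theorem stem_purge (hpo : IsPartialOrder α le) {n : ℕ} {s : Fin n → Fin n → Prop} :
    ∀ (N : ℕ) (f : Fin n → α), (Finset.univ.filter (fun j => f j ∈ Mstar le)).card ≤ N →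
    Function.Injective f → (∀ i j, s i j ↔ le (f i) (f j)) →
    (∀ (x : α) (j : Fin n), le x (f j) → ∃ i, f i = x) →
    ∃ f' : Fin n → α, (∀ i, f' i ∉ Mstar le) ∧ Function.Injective f' ∧
      (∀ i j, s i j ↔ le (f' i) (f' j)) ∧
      (∀ (x : α) (j : Fin n), le x (f' j) → ∃ i, f' i = x) := by
  classical
  intro N
  induction N with
  | zero =>
    intro f hcard hinj hiso hdc
    refine ⟨f, ?_, hinj, hiso, hdc⟩
    intro i hi
    have hmem : i ∈ Finset.univ.filter (fun j => f j ∈ Mstar le) := by simp [hi]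
    rw [Nat.le_zero, Finset.card_eq_zero] at hcard
    rw [hcard] at hmem
    exact absurd hmem (Finset.notMem_empty i)
  | succ N ih =>
    intro f hcard hinj hiso hdc
    by_cases hbad : ∃ j₀, f j₀ ∈ Mstar le
    · obtain ⟨j₀, hj₀⟩ := hbad
      have hfresh : ({y | ¬ IsMaximalRel le y ∧ spast le y = spast le (f j₀)} \
          Set.range f).Nonempty := (hj₀.2.diff (Set.finite_range f)).nonempty
      obtain ⟨y, hy, hyr⟩ := hfresh
      obtain ⟨hinj', hiso', hdc'⟩ := stem_replace hpo hinj hiso hdc j₀ hj₀.1 hyr hy.2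
      apply ih (Function.update f j₀ y) ?_ hinj' hiso' hdc'
      have hsub : Finset.univ.filter (fun j => Function.update f j₀ y j ∈ Mstar le) ⊆
          (Finset.univ.filter (fun j => f j ∈ Mstar le)).erase j₀ := by
        intro j hj
        rw [Finset.mem_filter] at hj
        have hjne : j ≠ j₀ := by
          rintro rfl
          rw [Function.update_self] at hj
          exact hy.1 hj.2.1
        rw [Function.update_of_ne hjne] at hj
        exact Finset.mem_erase.mpr ⟨hjne, Finset.mem_filter.mpr ⟨Finset.mem_univ j, hj.2⟩⟩
      have hmem : j₀ ∈ Finset.univ.filter (fun j => f j ∈ Mstar le) := by simp [hj₀]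
      have := Finset.card_le_card hsub
      rw [Finset.card_erase_of_mem hmem] at this
      have hpos : 1 ≤ (Finset.univ.filter (fun j => f j ∈ Mstar le)).card :=
        Finset.card_pos.mpr ⟨j₀, hmem⟩
      omega
    · push_neg at hbad
      exact ⟨f, hbad, hinj, hiso, hdc⟩

open scoped Classical in
theorem rogue_of_mstar_infinite (hpo : IsPartialOrder α le) (hc : Countable α)
    (hpf : PastFinite le) (hM : (Mstar le).Infinite) : IsRogueRel le := by
  classical
  refine ⟨{x : α // x ∉ Mstar le}, fun u v => le u.val v.val, ?_, ?_, ?_, ?_, ?_⟩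
  · exact { refl := fun x => lerefl hpo x.val,
            trans := fun a b c h1 h2 => letrans hpo h1 h2,
            antisymm := fun a b h1 h2 => Subtype.ext (leantisymm hpo h1 h2) }
  · infer_instance
  · intro v
    have hsub : {u : {x : α // x ∉ Mstar le} | le u.val v.val} ⊆
        Subtype.val ⁻¹' (past le v.val) := fun u hu => hu
    exact Set.Finite.subset (Set.Finite.preimage Subtype.val_injective.injOn (hpf v.val)) hsub
  · -- not isomorphic
    set le' : {x : α // x ∉ Mstar le} → {x : α // x ∉ Mstar le} → Prop :=
      fun u v => le u.val v.val with hle'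
    -- (ii) nonmaximality transfer
    have hmax_iff : ∀ v : {x : α // x ∉ Mstar le},
        IsMaximalRel le' v ↔ IsMaximalRel le v.val := by
      intro v
      constructor
      · intro hm' z hz
        by_contra hne
        by_cases hzM : z ∈ Mstar le
        · obtain ⟨y, hy⟩ := hzM.2.nonempty
          have hvz : v.val ∈ spast le z := ⟨hz, fun hzz => hne hzz.symm⟩
          have hvy : v.val ∈ spast le y := hy.2 ▸ hvz
          have : le' v ⟨y, fun hcm => hy.1 hcm.1⟩ := hvy.1
          have := hm' _ this
          exact hvy.2 (congrArg Subtype.val this).symm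
        · have : le' v ⟨z, hzM⟩ := hz
          have := hm' _ this
          exact hne (congrArg Subtype.val this)
      · intro hm u hu
        exact Subtype.ext (hm u.val hu)
    -- (i) strict-past transfer
    have hspast_val : ∀ v : {x : α // x ∉ Mstar le},
        Subtype.val '' spast le' v = spast le v.val := by
      intro v
      ext z
      constructor
      · rintro ⟨u, ⟨h1, h2⟩, rfl⟩
        exact ⟨h1, fun hz => h2 (Subtype.ext hz)⟩
      · rintro ⟨h1, h2⟩
        have hznm : ¬ IsMaximalRel le z := not_max_of_ltrel ⟨h1, h2⟩
        exact ⟨⟨z, fun hcm => hznm hcm.1⟩, ⟨h1, fun hc => h2 (congrArg Subtype.val hc)⟩, rfl⟩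
    -- (iii) Mstar of new order is empty
    have hMempty : Mstar le' = ∅ := by
      rw [Set.eq_empty_iff_forall_notMem]
      intro v hv
      have hvmax : IsMaximalRel le v.val := (hmax_iff v).mp hv.1
      apply v.2
      refine ⟨hvmax, ?_⟩
      have himg : Subtype.val '' {u | ¬ IsMaximalRel le' u ∧ spast le' u = spast le' v} ⊆
          {y | ¬ IsMaximalRel le y ∧ spast le y = spast le v.val} := by
        rintro z ⟨u, ⟨h1, h2⟩, rfl⟩
        refine ⟨fun hcm => h1 ((hmax_iff u).mpr hcm), ?_⟩
        rw [← hspast_val u, ← hspast_val v, h2]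
      exact Set.Infinite.mono himg (hv.2.image Subtype.val_injective.injOn)
    intro hiso
    obtain ⟨e, himg⟩ := orderIso_mstar hiso
    obtain ⟨m, hm⟩ := hM.nonempty
    have : e m ∈ Mstar le' := himg ▸ ⟨m, hm, rfl⟩
    rw [hMempty] at this
    exact this
  · -- same stems
    intro n s
    constructor
    · rintro ⟨f, hinj, hiso_, hdc⟩
      obtain ⟨f', hgood, hinj', hiso', hdc'⟩ :=
        stem_purge hpo (Finset.univ.filter (fun j => f j ∈ Mstar le)).card f le_rfl hinj hiso_ hdc
      refine ⟨fun i => ⟨f' i, hgood i⟩, ?_, hiso', ?_⟩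
      · intro i j hij
        exact hinj' (congrArg Subtype.val hij)
      · intro u j hu
        obtain ⟨i, hi⟩ := hdc' u.val j hu
        exact ⟨i, Subtype.ext hi⟩
    · rintro ⟨f, hinj, hiso_, hdc⟩
      refine ⟨fun i => (f i).val, ?_, hiso_, ?_⟩
      · intro i j hij
        exact hinj (Subtype.ext hij)
      · intro x j hxj
        rcases eq_or_ne x (f j).val with rfl | hne
        · exact ⟨j, rfl⟩
        · have hnm : ¬ IsMaximalRel le x := not_max_of_ltrel ⟨hxj, hne⟩
          obtain ⟨i, hi⟩ := hdc ⟨x, fun hcm => hnm hcm.1⟩ j hxj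
          exact ⟨i, congrArg Subtype.val hi⟩

end CaseA

section CaseB

def optle (le : α → α → Prop) (D : Set α) : Option α → Option α → Prop
  | some a, some b => le a b
  | some a, none => a ∈ D
  | none, some _ => False
  | none, none => True

variable {le : α → α → Prop} {D : Set α}

theorem optle_ss {a b : α} : optle le D (some a) (some b) ↔ le a b := Iff.rfl
theorem optle_sn {a : α} : optle le D (some a) none ↔ a ∈ D := Iff.rfl
theorem optle_ns {a : α} : ¬ optle le D none (some a) := fun h => h
theorem optle_nn : optle le D none none := trivial

theorem optle_po (hpo : IsPartialOrder α le) (hDdc : DownClosed le D)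
    (hDnm : ∀ d ∈ D, ¬ IsMaximalRel le d) : IsPartialOrder (Option α) (optle le D) := by
  refine { refl := ?_, trans := ?_, antisymm := ?_ }
  · intro x
    cases x with
    | none => exact optle_nn
    | some a => exact (optle_ss).mpr (lerefl hpo a)
  · intro a b c h1 h2
    cases a with
    | none =>
      cases b with
      | none => exact h2
      | some b' => exact absurd h1 optle_ns
    | some a' =>
      cases b with
      | none =>
        cases c with
        | none => exact h1
        | some c' => exact absurd h2 optle_ns
      | some b' =>
        cases c with
        | none => exact (optle_sn).mpr (hDdc (optle_ss.mp h1) (optle_sn.mp h2))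
        | some c' => exact optle_ss.mpr (letrans hpo (optle_ss.mp h1) (optle_ss.mp h2))
  · intro a b h1 h2
    cases a with
    | none =>
      cases b with
      | none => rfl
      | some b' => exact absurd h1 optle_ns
    | some a' =>
      cases b with
      | none => exact absurd h2 optle_ns
      | some b' => exact congrArg some (leantisymm hpo (optle_ss.mp h1) (optle_ss.mp h2))

theorem optle_max_none : IsMaximalRel (optle le D) none := by
  intro u hu
  cases u with
  | none => rfl
  | some a => exact absurd hu optle_ns

theorem optle_spast_some (y : α) :
    spast (optle le D) (some y) = some '' spast le y := by
  ext u
  cases u with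
  | none =>
    simp only [Set.mem_image]
    constructor
    · rintro ⟨h1, _⟩
      exact absurd h1 optle_ns
    · rintro ⟨a, _, h⟩
      exact absurd h (by simp)
  | some a =>
    constructor
    · rintro ⟨h1, h2⟩
      exact ⟨a, ⟨optle_ss.mp h1, fun hc => h2 (congrArg some hc)⟩, rfl⟩
    · rintro ⟨b, ⟨h1, h2⟩, hb⟩
      rcases Option.some_injective α hb
      exact ⟨optle_ss.mpr h1, fun hc => h2 (Option.some_injective α hc)⟩

theorem optle_spast_none : spast (optle le D) none = some '' D := by
  ext u
  cases u with
  | none =>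
    constructor
    · rintro ⟨_, h2⟩
      exact absurd rfl h2
    · rintro ⟨a, _, h⟩
      exact absurd h (by simp)
  | some a =>
    constructor
    · rintro ⟨h1, _⟩
      exact ⟨a, optle_sn.mp h1, rfl⟩
    · rintro ⟨b, hb, heq⟩
      rcases Option.some_injective α heq
      exact ⟨optle_sn.mpr hb, by simp⟩

theorem optle_max_some (hDnm : ∀ d ∈ D, ¬ IsMaximalRel le d) (m : α) :
    IsMaximalRel (optle le D) (some m) ↔ IsMaximalRel le m := by
  constructor
  · intro hm z hz
    have := hm (some z) (optle_ss.mpr hz)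
    exact (Option.some_injective α this)
  · intro hm u hu
    cases u with
    | none => exact absurd hm (hDnm m (optle_sn.mp hu))
    | some z => exact congrArg some (hm z (optle_ss.mp hu))

end CaseB

section CaseB2
variable {le : α → α → Prop}

open scoped Classical in
theorem rogue_of_mstar_finite (hpo : IsPartialOrder α le) (hc : Countable α)
    (hpf : PastFinite le) (hMfin : (Mstar le).Finite)
    (hΓ : ∃ k, {x : α | HasLevel le x k ∧ ¬ IsMaximalRel le x}.Infinite) : IsRogueRel le := by
  obtain ⟨D, hD⟩ := exists_common_spast hpo hpf hΓ
  obtain ⟨x₀, hx₀⟩ := hD.nonempty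
  have hDspast : D = spast le x₀ := hx₀.2.symm
  have hDfin : D.Finite := by
    rw [hDspast]
    exact (hpf x₀).subset (fun z hz => hz.1)
  have hDnm : ∀ d ∈ D, ¬ IsMaximalRel le d := by
    intro d hd
    rw [hDspast] at hd
    exact not_max_of_ltrel hd
  have hDdc : DownClosed le D := by
    intro u v huv hv
    rw [hDspast] at hv ⊢
    exact le_trans_ltrel hpo huv hv
  have hpo' : IsPartialOrder (Option α) (optle le D) := optle_po hpo hDdc hDnm
  -- fibers of the new order
  have hfib_some : ∀ m : α,
      {y' : Option α | ¬ IsMaximalRel (optle le D) y' ∧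
        spast (optle le D) y' = spast (optle le D) (some m)} =
      some '' {y : α | ¬ IsMaximalRel le y ∧ spast le y = spast le m} := by
    intro m
    ext u
    constructor
    · rintro ⟨h1, h2⟩
      cases u with
      | none => exact absurd optle_max_none h1
      | some y =>
        refine ⟨y, ⟨fun hc => h1 ((optle_max_some hDnm y).mpr hc), ?_⟩, rfl⟩
        rw [optle_spast_some, optle_spast_some] at h2
        exact Set.image_injective.mpr (Option.some_injective α) h2
    · rintro ⟨y, ⟨h1, h2⟩, rfl⟩
      refine ⟨fun hc => h1 ((optle_max_some hDnm y).mp hc), ?_⟩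
      rw [optle_spast_some, optle_spast_some, h2]
  have hfib_none : some '' {x : α | ¬ IsMaximalRel le x ∧ spast le x = D} ⊆
      {y' : Option α | ¬ IsMaximalRel (optle le D) y' ∧
        spast (optle le D) y' = spast (optle le D) none} := by
    rintro u ⟨x, ⟨h1, h2⟩, rfl⟩
    refine ⟨fun hc => h1 ((optle_max_some hDnm x).mp hc), ?_⟩
    rw [optle_spast_some, optle_spast_none, h2]
  -- Mstar of the new order
  have hMstar' : Mstar (optle le D) = insert none (some '' Mstar le) := by
    ext u
    constructor
    · rintro ⟨h1, h2⟩
      cases u with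
      | none => exact Set.mem_insert _ _
      | some m =>
        refine Set.mem_insert_of_mem _ ⟨m, ⟨(optle_max_some hDnm m).mp h1, ?_⟩, rfl⟩
        rw [hfib_some m] at h2
        exact h2.of_image
    · intro hu
      rcases hu with rfl | ⟨m, hm, rfl⟩
      · refine ⟨optle_max_none, ?_⟩
        exact Set.Infinite.mono hfib_none (hD.image (Option.some_injective α).injOn)
      · refine ⟨(optle_max_some hDnm m).mpr hm.1, ?_⟩
        rw [hfib_some m]
        exact hm.2.image (Option.some_injective α).injOn
  refine ⟨Option α, optle le D, hpo', inferInstance, ?_, ?_, ?_⟩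
  · -- past-finite
    intro v
    cases v with
    | none =>
      refine Set.Finite.subset ((hDfin.image some).insert none) ?_
      intro u hu
      cases u with
      | none => exact Set.mem_insert _ _
      | some a =>
        have hu' : optle le D (some a) none := hu
        exact Set.mem_insert_of_mem _ ⟨a, optle_sn.mp hu', rfl⟩
    | some b =>
      refine Set.Finite.subset ((hpf b).image some) ?_
      intro u hu
      cases u with
      | none => exact absurd (show optle le D none (some b) from hu) optle_ns
      | some a =>
        have hu' : optle le D (some a) (some b) := hu
        exact ⟨a, optle_ss.mp hu', rfl⟩
  · -- not isomorphic
    intro hiso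
    obtain ⟨e, himg⟩ := orderIso_mstar hiso
    have hcard1 : (Mstar (optle le D)).ncard = (Mstar le).ncard + 1 := by
      rw [hMstar', Set.ncard_insert_of_notMem (by simp) (hMfin.image some),
        Set.ncard_image_of_injective _ (Option.some_injective α)]
    have hcard2 : (Mstar (optle le D)).ncard = (Mstar le).ncard := by
      rw [← himg, Set.ncard_image_of_injective _ e.injective]
    omega
  · -- same stems
    intro n s
    have haux : ∀ f : Fin n → Option α, (∀ i, f i ≠ none) →
        Function.Injective f → (∀ i j, s i j ↔ optle le D (f i) (f j)) →
        (∀ (x : Option α) (j : Fin n), optle le D x (f j) → ∃ i, f i = x) →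
        IsStemIn s le := by
      intro f hnn hinj hiso hdc
      have hsome : ∀ i, ∃ a, f i = some a := by
        intro i
        cases hfi : f i with
        | none => exact absurd hfi (hnn i)
        | some a => exact ⟨a, rfl⟩
      choose f' hf' using hsome
      refine ⟨f', ?_, ?_, ?_⟩
      · intro i j hij
        apply hinj
        rw [hf' i, hf' j, hij]
      · intro i j
        rw [hiso i j, hf' i, hf' j]
        exact (optle_ss (le := le) (D := D)).symm
      · intro x j hxj
        have : optle le D (some x) (f j) := by
          rw [hf' j]
          exact optle_ss.mpr hxj
        obtain ⟨i, hi⟩ := hdc (some x) j this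
        refine ⟨i, ?_⟩
        have := (hf' i).symm.trans hi
        exact Option.some_injective α this
    constructor
    · rintro ⟨f, hinj, hiso_, hdc⟩
      refine ⟨some ∘ f, (Option.some_injective α).comp hinj, ?_, ?_⟩
      · intro i j
        rw [hiso_ i j]
        exact (optle_ss (le := le) (D := D)).symm
      · intro u j hu
        cases u with
        | none => exact absurd hu optle_ns
        | some x =>
          obtain ⟨i, hi⟩ := hdc x j (optle_ss.mp hu)
          exact ⟨i, congrArg some hi⟩
    · rintro ⟨f, hinj, hiso_, hdc⟩
      by_cases hnone : ∃ j₀, f j₀ = none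
      · obtain ⟨j₀, hj₀⟩ := hnone
        have hXfr : ({x : α | ¬ IsMaximalRel le x ∧ spast le x = D} \
            (some ⁻¹' Set.range f)).Nonempty := by
          refine Set.Infinite.nonempty (hD.diff ?_)
          exact Set.Finite.preimage (Option.some_injective α).injOn (Set.finite_range f)
        obtain ⟨x, hx, hxr⟩ := hXfr
        have hymax : IsMaximalRel (optle le D) (f j₀) := by
          rw [hj₀]; exact optle_max_none
        have hy2 : spast (optle le D) (some x) = spast (optle le D) (f j₀) := by
          rw [hj₀, optle_spast_some, optle_spast_none, hx.2]
        obtain ⟨hinj', hiso', hdc'⟩ :=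
          stem_replace hpo' hinj hiso_ hdc j₀ hymax (fun hr => hxr hr) hy2
        apply haux (Function.update f j₀ (some x)) ?_ hinj' hiso' hdc'
        intro i
        by_cases hij : i = j₀
        · rw [hij, Function.update_self]
          simp
        · rw [Function.update_of_ne hij]
          intro hcn
          exact hij (hinj (hcn.trans hj₀.symm))
      · push_neg at hnone
        exact haux f hnone hinj hiso_ hdc

theorem easy_direction (hpo : IsPartialOrder α le) (hc : Countable α) (hpf : PastFinite le)
    (hΓ : ∃ k, {x : α | HasLevel le x k ∧ ¬ IsMaximalRel le x}.Infinite) : IsRogueRel le := by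
  by_cases hM : (Mstar le).Finite
  · exact rogue_of_mstar_finite hpo hc hpf hM hΓ
  · exact rogue_of_mstar_infinite hpo hc hpf hM

end CaseB2

section HardDir
variable {le₁ : α → α → Prop} {le₂ : β → β → Prop}

/-- nonmaximal elements of level at most `n`. -/
def Aset (le : α → α → Prop) (n : ℕ) : Set α := {x | ¬ IsMaximalRel le x ∧ lvl le x ≤ n}

/-- maximal elements with exact strict past `E`. -/
def MX (le : α → α → Prop) (E : Set α) : Set α := {m | IsMaximalRel le m ∧ spast le m = E}

/-- nonmaximal elements with exact strict past `E`. -/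
def NM (le : α → α → Prop) (E : Set α) : Set α := {y | ¬ IsMaximalRel le y ∧ spast le y = E}

open Classical in
/-- cardinality of `s` capped at `n`. -/
noncomputable def capped {γ : Type*} (n : ℕ) (s : Set γ) : ℕ :=
  if h : s.Finite then min n h.toFinset.card else n

theorem capped_le {γ : Type*} (n : ℕ) (s : Set γ) : capped n s ≤ n := by
  unfold capped
  split <;> omega

theorem capped_exists_finset {γ : Type*} (n : ℕ) (s : Set γ) :
    ∃ t : Finset γ, ↑t ⊆ s ∧ t.card = capped n s := by
  classical
  unfold capped
  split
  case isTrue h =>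
    obtain ⟨t, ht1, ht2⟩ := Finset.exists_subset_card_eq
      (min_le_right n h.toFinset.card)
    exact ⟨t, fun x hx => h.mem_toFinset.mp (ht1 hx), ht2⟩
  case isFalse h =>
    obtain ⟨t, ht1, ht2⟩ := Set.Infinite.exists_subset_card_eq h n
    exact ⟨t, ht1, ht2⟩

theorem le_capped_of_finset {γ : Type*} {n : ℕ} {s : Set γ} {k : ℕ}
    (hk : k ≤ n) (t : Finset γ) (ht : ↑t ⊆ s) (htc : k ≤ t.card) : k ≤ capped n s := by
  classical
  unfold capped
  split
  case isTrue h =>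
    have : t ⊆ h.toFinset := fun x hx => h.mem_toFinset.mpr (ht hx)
    have := Finset.card_le_card this
    omega
  case isFalse h => omega

theorem capped_min {γ : Type*} {m n : ℕ} (hnm : n ≤ m) (s : Set γ) :
    capped n s = min n (capped m s) := by
  unfold capped
  split <;> omega

/-- transfer of finite sets of nonmaximal elements along same-stems,
preserving level and nonmaximality. -/
theorem gadget_count (hpo₁ : IsPartialOrder α le₁) (hpo₂ : IsPartialOrder β le₂)
    (hpf₁ : PastFinite le₁) (hss : SameStems le₁ le₂)
    {S : Set α} (hS : S.Finite) (hSnm : ∀ x ∈ S, ¬ IsMaximalRel le₁ x) :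
    ∃ η : S → β, Function.Injective η ∧
      ∀ x : S, ¬ IsMaximalRel le₂ (η x) ∧ lvl le₂ (η x) = lvl le₁ x.val := by
  classical
  have hw : ∀ x ∈ S, ∃ z, LtRel le₁ x z := fun x hx => not_max_iff.mp (hSnm x hx)
  choose! w hw using hw
  set W := dcl le₁ (S ∪ w '' S) with hW
  have hWfin : W.Finite := dcl_finite hpf₁ (hS.union (hS.image w))
  have hWdc : DownClosed le₁ W := dcl_downClosed hpo₁ _
  have hSW : S ⊆ W := fun x hx => subset_dcl hpo₁ _ (Set.mem_union_left _ hx)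
  have hwW : ∀ x ∈ S, w x ∈ W := fun x hx =>
    subset_dcl hpo₁ _ (Set.mem_union_right _ ⟨x, hx, rfl⟩)
  obtain ⟨g, hg⟩ := sameStems_transfer hss hWfin hWdc
  refine ⟨fun x => g ⟨x.val, hSW x.2⟩, ?_, ?_⟩
  · intro x y hxy
    have h2 := hg.inj hxy
    rw [Subtype.mk.injEq] at h2
    exact Subtype.ext h2
  · intro x
    constructor
    · exact hg.not_max_of_witness ⟨x.val, hSW x.2⟩ ⟨w x.val, hwW x.val x.2⟩ (hw x.val x.2)
    · exact hg.lvl_eq hpo₁ hpo₂ hWdc ⟨x.val, hSW x.2⟩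

/-- level sets of nonmaximal elements in `β` are finite, given that they are in `α`. -/
theorem level_finite_transfer (hpo₁ : IsPartialOrder α le₁) (hpo₂ : IsPartialOrder β le₂)
    (hpf₁ : PastFinite le₁) (hpf₂ : PastFinite le₂) (hss : SameStems le₁ le₂)
    (hfin : ∀ k, {x : α | ¬ IsMaximalRel le₁ x ∧ lvl le₁ x = k}.Finite) (k : ℕ) :
    {y : β | ¬ IsMaximalRel le₂ y ∧ lvl le₂ y = k}.Finite := by
  classical
  by_contra hinf
  have hinf : {y : β | ¬ IsMaximalRel le₂ y ∧ lvl le₂ y = k}.Infinite := hinf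
  set tgt := {x : α | ¬ IsMaximalRel le₁ x ∧ lvl le₁ x = k} with htgt
  haveI : Finite tgt := (hfin k).to_subtype
  obtain ⟨t, ht1, ht2⟩ := hinf.exists_subset_card_eq (tgt.ncard + 1)
  have hss' : SameStems le₂ le₁ := fun n s => (hss n s).symm
  obtain ⟨η, hηinj, hη⟩ := gadget_count hpo₂ hpo₁ hpf₂ hss' (t.finite_toSet)
    (fun x hx => (ht1 hx).1)
  have hmap : ∀ x : (t : Set β), η x ∈ tgt := by
    intro x
    refine ⟨(hη x).1, ?_⟩
    rw [(hη x).2]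
    exact (ht1 x.2).2
  have hinj2 : Function.Injective (fun x : (t : Set β) => (⟨η x, hmap x⟩ : tgt)) := by
    intro x y hxy
    exact hηinj (congrArg Subtype.val hxy)
  have hcard := Nat.card_le_card_of_injective _ hinj2
  rw [Nat.card_coe_set_eq, Nat.card_coe_set_eq, Set.ncard_coe_finset] at hcard
  omega

theorem aset_finite (hfin : ∀ k, {x : α | ¬ IsMaximalRel le₁ x ∧ lvl le₁ x = k}.Finite)
    (n : ℕ) : (Aset le₁ n).Finite := by
  have hcov : Aset le₁ n ⊆
      ⋃ k ∈ Finset.range (n+1), {x : α | ¬ IsMaximalRel le₁ x ∧ lvl le₁ x = k} := by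
    intro x hx
    exact Set.mem_biUnion (Finset.mem_range.mpr (Nat.lt_succ_of_le hx.2)) ⟨hx.1, rfl⟩
  exact Set.Finite.subset (Set.Finite.biUnion (Finset.range (n+1)).finite_toSet
    (fun k _ => hfin k)) hcov

theorem aset_downClosed (hpo₁ : IsPartialOrder α le₁) (hpf₁ : PastFinite le₁) (n : ℕ) :
    DownClosed le₁ (Aset le₁ n) := by
  intro x y hxy hy
  rcases eq_or_ne x y with rfl | hne
  · exact hy
  · refine ⟨not_max_of_ltrel ⟨hxy, hne⟩, ?_⟩
    have h1 := lvl_lt_of_ltrel hpo₁ hpf₁ ⟨hxy, hne⟩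
    have h2 := hy.2
    omega

theorem aset_card_le (hpo₁ : IsPartialOrder α le₁) (hpo₂ : IsPartialOrder β le₂)
    (hpf₁ : PastFinite le₁) (hss : SameStems le₁ le₂) {n : ℕ}
    (hA : (Aset le₁ n).Finite) (hB : (Aset le₂ n).Finite) :
    (Aset le₁ n).ncard ≤ (Aset le₂ n).ncard := by
  obtain ⟨η, hηinj, hη⟩ := gadget_count hpo₁ hpo₂ hpf₁ hss hA (fun x hx => hx.1)
  have hmap : ∀ x : (Aset le₁ n), η x ∈ Aset le₂ n := by
    intro x
    refine ⟨(hη x).1, ?_⟩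
    rw [(hη x).2]
    exact x.2.2
  have hinj2 : Function.Injective (fun x : (Aset le₁ n) => (⟨η x, hmap x⟩ : Aset le₂ n)) :=
    fun x y hxy => hηinj (congrArg Subtype.val hxy)
  haveI := hB.to_subtype
  have := Nat.card_le_card_of_injective _ hinj2
  rwa [Nat.card_coe_set_eq, Nat.card_coe_set_eq] at this

theorem aset_card_eq (hpo₁ : IsPartialOrder α le₁) (hpo₂ : IsPartialOrder β le₂)
    (hpf₁ : PastFinite le₁) (hpf₂ : PastFinite le₂) (hss : SameStems le₁ le₂)
    (hfin₁ : ∀ k, {x : α | ¬ IsMaximalRel le₁ x ∧ lvl le₁ x = k}.Finite) (n : ℕ) :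
    (Aset le₁ n).ncard = (Aset le₂ n).ncard := by
  classical
  have hfin₂ := level_finite_transfer hpo₁ hpo₂ hpf₁ hpf₂ hss hfin₁
  have h1 := aset_card_le hpo₁ hpo₂ hpf₁ hss (aset_finite hfin₁ n) (aset_finite hfin₂ n)
  have h2 := aset_card_le hpo₂ hpo₁ hpf₂ (fun m s => (hss m s).symm)
    (aset_finite hfin₂ n) (aset_finite hfin₁ n)
  omega

end HardDir

section Konig

theorem konig {N : ℕ → Type} [hfin : ∀ n, Finite (N n)] (hne : ∀ n, Nonempty (N n))
    (r : ∀ n, N (n+1) → N n) :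
    ∃ x : ∀ n, N n, ∀ n, r n (x (n+1)) = x n := by
  classical
  let Pre : ℕ → ∀ n, Set (N n) := fun k => Nat.rec (fun _ => Set.univ)
    (fun _ ih n => {y | ∃ z ∈ ih (n+1), r n z = y}) k
  have hPre_succ : ∀ k n, Pre (k+1) n = {y | ∃ z ∈ Pre k (n+1), r n z = y} := fun k n => rfl
  have hPne : ∀ k n, (Pre k n).Nonempty := by
    intro k
    induction k with
    | zero => intro n; exact ⟨(hne n).some, trivial⟩
    | succ k ih =>
      intro n
      obtain ⟨z, hz⟩ := ih (n+1)
      exact ⟨r n z, z, hz, rfl⟩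
  have hPmono : ∀ k n, Pre (k+1) n ⊆ Pre k n := by
    intro k
    induction k with
    | zero => intro n y _; trivial
    | succ k ih =>
      intro n y hy
      obtain ⟨z, hz, rfl⟩ := hy
      exact ⟨z, ih (n+1) hz, rfl⟩
  have hPanti : ∀ k k' n, k ≤ k' → Pre k' n ⊆ Pre k n := by
    intro k k' n h
    induction h with
    | refl => exact fun y hy => hy
    | step h ih => exact fun y hy => ih (hPmono _ n hy)
  set Viable : ∀ n, Set (N n) := fun n => {y | ∀ k, y ∈ Pre k n} with hViable
  have hVne : ∀ n, (Viable n).Nonempty := by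
    intro n
    have hchoice : ∀ k, ∃ y, y ∈ Pre k n := fun k => hPne k n
    choose c hc using hchoice
    obtain ⟨y, hy⟩ := Finite.exists_infinite_fiber c
    refine ⟨y, ?_⟩
    intro k
    have : (c ⁻¹' {y}).Infinite := Set.infinite_coe_iff.mp hy
    obtain ⟨k', hk'1, hk'2⟩ := this.exists_gt k
    have : c k' = y := hk'1
    rw [← this]
    exact hPanti k k' n (le_of_lt hk'2) (hc k')
  have hVstep : ∀ n, ∀ y ∈ Viable n, ∃ z, z ∈ Viable (n+1) ∧ r n z = y := by
    intro n y hy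
    have hchoice : ∀ k, ∃ z, z ∈ Pre k (n+1) ∧ r n z = y := by
      intro k
      have := hy (k+1)
      rw [hPre_succ] at this
      obtain ⟨z, hz, hzy⟩ := this
      exact ⟨z, hz, hzy⟩
    choose c hc using hchoice
    obtain ⟨z, hz⟩ := Finite.exists_infinite_fiber c
    have hzinf : (c ⁻¹' {z}).Infinite := Set.infinite_coe_iff.mp hz
    obtain ⟨k₀, hk₀1, _⟩ := hzinf.exists_gt 0
    have hz0 : c k₀ = z := hk₀1
    refine ⟨z, ?_, by rw [← hz0]; exact (hc k₀).2⟩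
    intro k
    obtain ⟨k', hk'1, hk'2⟩ := hzinf.exists_gt k
    have hck' : c k' = z := hk'1
    rw [← hck']
    exact hPanti k k' (n+1) (le_of_lt hk'2) (hc k').1
  let X : ∀ n, {y : N n // y ∈ Viable n} := fun n => Nat.rec
    ⟨(hVne 0).some, (hVne 0).some_mem⟩
    (fun n ih => ⟨(hVstep n ih.val ih.2).choose,
      (hVstep n ih.val ih.2).choose_spec.1⟩) n
  refine ⟨fun n => (X n).val, ?_⟩
  intro n
  exact (hVstep n (X n).val (X n).2).choose_spec.2

end Konig

section Nodes
variable {le₁ : α → α → Prop} {le₂ : β → β → Prop}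

/-- admissible down-sets at stage `n`: down-closed sets of nonmaximal elements
of level `< n`. -/
def Dfam (le : α → α → Prop) (n : ℕ) : Set (Set α) :=
  {E | DownClosed le E ∧ ∀ z ∈ E, ¬ IsMaximalRel le z ∧ lvl le z < n}

/-- image of a subset under a map of subtypes. -/
def mapSet {A : Set α} {B : Set β} (ψ : A → B) (E : Set α) : Set β :=
  {b | ∃ x : A, x.val ∈ E ∧ (ψ x).val = b}

theorem stemEmb_of_equiv {A : Set α} {B : Set β} (hB : DownClosed le₂ B)
    (ψ : A ≃ B) (hiso : ∀ x y : A, le₁ x.val y.val ↔ le₂ (ψ x).val (ψ y).val) :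
    StemEmb le₁ le₂ A (fun x => (ψ x).val) := by
  refine ⟨?_, hiso, ?_⟩
  · intro x y hxy
    exact ψ.injective (Subtype.ext hxy)
  · intro u y hu
    have huB : u ∈ B := hB hu (ψ y).2
    exact ⟨ψ.symm ⟨u, huB⟩, by simp⟩

theorem dfam_subset_aset {n : ℕ} {E : Set α} (hE : E ∈ Dfam le₁ n) : E ⊆ Aset le₁ n :=
  fun z hz => ⟨(hE.2 z hz).1, le_of_lt (hE.2 z hz).2⟩

theorem dfam_finite (hfinA : (Aset le₁ n).Finite) : (Dfam le₁ n).Finite := by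
  exact Set.Finite.subset hfinA.finite_subsets (fun E hE => dfam_subset_aset hE)

/-- one half of the node-existence argument: a level-preserving order-bijection
of the truncations, with the one-sided capped inequality. -/
theorem half_node (hpo₁ : IsPartialOrder α le₁) (hpo₂ : IsPartialOrder β le₂)
    (hpf₁ : PastFinite le₁) (hpf₂ : PastFinite le₂) (hss : SameStems le₁ le₂) {n : ℕ}
    (hA : (Aset le₁ n).Finite) (hB : (Aset le₂ n).Finite)
    (hcard : (Aset le₁ n).ncard = (Aset le₂ n).ncard) :
    ∃ ψ : ↥(Aset le₁ n) ≃ ↥(Aset le₂ n),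
      (∀ x y : ↥(Aset le₁ n), le₁ x.val y.val ↔ le₂ (ψ x).val (ψ y).val) ∧
      (∀ x : ↥(Aset le₁ n), lvl le₂ (ψ x).val = lvl le₁ x.val) ∧
      (∀ E ∈ Dfam le₁ n,
        capped n (MX le₁ E) ≤ capped n (MX le₂ (mapSet ψ E)) ∧
        mapSet ψ E ∈ Dfam le₂ n) := by
  classical
  -- decorations
  have hDecEx : ∀ E : Set α, ∃ t : Finset α, ↑t ⊆ MX le₁ E ∧ t.card = capped n (MX le₁ E) :=
    fun E => capped_exists_finset n _
  choose Dec hDec1 hDec2 using hDecEx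
  -- witnesses
  have hwEx : ∀ x ∈ Aset le₁ n, ∃ z, LtRel le₁ x z := fun x hx => not_max_iff.mp hx.1
  choose! w hw using hwEx
  -- the gadget
  set W := dcl le₁ (Aset le₁ n ∪ w '' Aset le₁ n ∪ ⋃ E ∈ Dfam le₁ n, ↑(Dec E)) with hWdef
  have hWfin : W.Finite := by
    refine dcl_finite hpf₁ ?_
    refine Set.Finite.union (Set.Finite.union hA (hA.image w)) ?_
    exact Set.Finite.biUnion (dfam_finite hA) (fun E _ => (Dec E).finite_toSet)
  have hWdc : DownClosed le₁ W := dcl_downClosed hpo₁ _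
  have hAW : Aset le₁ n ⊆ W := fun x hx =>
    subset_dcl hpo₁ _ (Set.mem_union_left _ (Set.mem_union_left _ hx))
  have hwW : ∀ x ∈ Aset le₁ n, w x ∈ W := fun x hx =>
    subset_dcl hpo₁ _ (Set.mem_union_left _ (Set.mem_union_right _ ⟨x, hx, rfl⟩))
  have hDecW : ∀ E ∈ Dfam le₁ n, ↑(Dec E) ⊆ W := fun E hE m hm =>
    subset_dcl hpo₁ _ (Set.mem_union_right _ (Set.mem_biUnion hE hm))
  obtain ⟨g, hg⟩ := sameStems_transfer hss hWfin hWdc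
  -- the bijection of truncations
  have hmem : ∀ x : ↥(Aset le₁ n), g ⟨x.val, hAW x.2⟩ ∈ Aset le₂ n := by
    intro x
    constructor
    · exact hg.not_max_of_witness ⟨x.val, hAW x.2⟩ ⟨w x.val, hwW x.val x.2⟩ (hw x.val x.2)
    · rw [hg.lvl_eq hpo₁ hpo₂ hWdc ⟨x.val, hAW x.2⟩]
      exact x.2.2
  set Ψ₀ : ↥(Aset le₁ n) → ↥(Aset le₂ n) := fun x => ⟨g ⟨x.val, hAW x.2⟩, hmem x⟩ with hΨ₀
  have hΨinj : Function.Injective Ψ₀ := by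
    intro x y hxy
    rw [Subtype.mk.injEq] at hxy
    have := hg.inj hxy
    rw [Subtype.mk.injEq] at this
    exact Subtype.ext this
  have hΨbij : Function.Bijective Ψ₀ := by
    haveI := hA.to_subtype
    haveI := hB.to_subtype
    rw [Nat.bijective_iff_injective_and_card]
    refine ⟨hΨinj, ?_⟩
    rw [Nat.card_coe_set_eq, Nat.card_coe_set_eq]
    exact hcard
  set Ψ : ↥(Aset le₁ n) ≃ ↥(Aset le₂ n) := Equiv.ofBijective Ψ₀ hΨbij with hΨdef
  have hΨval : ∀ x : ↥(Aset le₁ n), (Ψ x).val = g ⟨x.val, hAW x.2⟩ := fun x => rfl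
  have hiso : ∀ x y : ↥(Aset le₁ n), le₁ x.val y.val ↔ le₂ (Ψ x).val (Ψ y).val := by
    intro x y
    rw [hΨval, hΨval]
    exact hg.iso ⟨x.val, hAW x.2⟩ ⟨y.val, hAW y.2⟩
  have hlvl : ∀ x : ↥(Aset le₁ n), lvl le₂ (Ψ x).val = lvl le₁ x.val := by
    intro x
    rw [hΨval]
    exact hg.lvl_eq hpo₁ hpo₂ hWdc ⟨x.val, hAW x.2⟩
  refine ⟨Ψ, hiso, hlvl, ?_⟩
  intro E hE
  have hEA : E ⊆ Aset le₁ n := dfam_subset_aset hE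
  have hEW : E ⊆ W := fun z hz => hAW (hEA hz)
  -- the image set described via g
  have hmapg : mapSet Ψ E = g '' {u : ↥W | u.val ∈ E} := by
    ext b
    constructor
    · rintro ⟨x, hx, rfl⟩
      exact ⟨⟨x.val, hAW x.2⟩, hx, (hΨval x).symm⟩
    · rintro ⟨u, hu, rfl⟩
      refine ⟨⟨u.val, hEA hu⟩, hu, ?_⟩
      rw [hΨval]
  -- spast of image elements with spast = E
  have hspastE : ∀ u : ↥W, spast le₁ u.val = E → spast le₂ (g u) = mapSet Ψ E := by
    intro u hu
    rw [hg.spast_image u, hmapg, hu]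
  -- elements of mapSet have small level
  have hlvlmap : ∀ b ∈ mapSet Ψ E, ¬ IsMaximalRel le₂ b ∧ lvl le₂ b < n := by
    rintro b ⟨x, hx, rfl⟩
    refine ⟨(Ψ x).2.1, ?_⟩
    rw [hlvl x]
    exact (hE.2 x.val hx).2
  -- mapSet is an admissible down-set in β
  have hmapDfam : mapSet Ψ E ∈ Dfam le₂ n := by
    refine ⟨?_, hlvlmap⟩
    intro u v huv hv
    rcases eq_or_ne u v with rfl | hne
    · exact hv
    · obtain ⟨x, hx, rfl⟩ := hv
      have hunm : ¬ IsMaximalRel le₂ u := not_max_of_ltrel ⟨huv, hne⟩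
      have hulvl : lvl le₂ u < n := by
        have h1 := lvl_lt_of_ltrel hpo₂ hpf₂ (⟨huv, hne⟩ : LtRel le₂ u (Ψ x).val)
        have h2 := (hlvlmap _ ⟨x, hx, rfl⟩).2
        omega
      have huB : u ∈ Aset le₂ n := ⟨hunm, le_of_lt hulvl⟩
      obtain ⟨x', hx'⟩ := Ψ.surjective ⟨u, huB⟩
      have hle : le₁ x'.val x.val := by
        rw [hiso x' x, hx']
        exact huv
      refine ⟨x', hE.1 hle hx, ?_⟩
      rw [hx']
  -- NM of the image set is the image of NM
  have hNM : ∀ y ∈ NM le₂ (mapSet Ψ E), ∃ x : ↥(Aset le₁ n),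
      x.val ∈ NM le₁ E ∧ (Ψ x).val = y := by
    rintro y ⟨hynm, hysp⟩
    have hylvl : lvl le₂ y ≤ n := by
      apply lvl_le_of_spast_bound hpo₂ hpf₂
      intro z hz
      have : z ∈ mapSet Ψ E := hysp ▸ hz
      exact (hlvlmap z this).2
    obtain ⟨x, hx⟩ := Ψ.surjective ⟨y, hynm, hylvl⟩
    have hxval : (Ψ x).val = y := by rw [hx]
    refine ⟨x, ⟨x.2.1, ?_⟩, hxval⟩
    -- show spast of x.val is E
    have hsp2 : spast le₂ (g ⟨x.val, hAW x.2⟩) = mapSet Ψ E := by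
      rw [← hΨval, hxval]
      exact hysp
    rw [hg.spast_image ⟨x.val, hAW x.2⟩, hmapg] at hsp2
    ext z
    constructor
    · intro hz
      have hzW : z ∈ W := hWdc hz.1 (hAW x.2)
      have : g ⟨z, hzW⟩ ∈ g '' {u : ↥W | u.val ∈ spast le₁ x.val} := ⟨⟨z, hzW⟩, hz, rfl⟩
      rw [hsp2] at this
      obtain ⟨u, hu, huz⟩ := this
      have := hg.inj huz
      rw [Subtype.mk.injEq] at this
      rw [← this]
      exact hu
    · intro hz
      have hzW : z ∈ W := hEW hz
      have : g ⟨z, hzW⟩ ∈ g '' {u : ↥W | u.val ∈ E} := ⟨⟨z, hzW⟩, hz, rfl⟩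
      rw [← hsp2] at this
      obtain ⟨u, hu, huz⟩ := this
      have := hg.inj huz
      rw [Subtype.mk.injEq] at this
      rw [← this]
      exact hu
  -- the decorations map into MX of the image set
  have hDecMX : ∀ m ∈ Dec E, ∀ (hmW : m ∈ W), g ⟨m, hmW⟩ ∈ MX le₂ (mapSet Ψ E) := by
    intro m hm hmW
    have hmMX : m ∈ MX le₁ E := hDec1 E hm
    have hsp : spast le₂ (g ⟨m, hmW⟩) = mapSet Ψ E := hspastE ⟨m, hmW⟩ hmMX.2
    refine ⟨?_, hsp⟩
    by_contra hnmax
    have : g ⟨m, hmW⟩ ∈ NM le₂ (mapSet Ψ E) := ⟨hnmax, hsp⟩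
    obtain ⟨x, hxNM, hxval⟩ := hNM _ this
    rw [hΨval] at hxval
    have := hg.inj hxval
    rw [Subtype.mk.injEq] at this
    rw [this] at hxNM
    exact hxNM.1 hmMX.1
  -- conclude the capped inequality
  have hcapineq : capped n (MX le₁ E) ≤ capped n (MX le₂ (mapSet Ψ E)) := by
    have hinj2 : Function.Injective (fun m : ↥(Dec E) => g ⟨m.val, hDecW E hE m.2⟩) := by
      intro m m' hmm
      have := hg.inj hmm
      rw [Subtype.mk.injEq] at this
      exact Subtype.ext this
    refine le_capped_of_finset (capped_le n _)
      ((Dec E).attach.image (fun m => g ⟨m.val, hDecW E hE m.2⟩)) ?_ ?_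
    · intro b hb
      rw [Finset.coe_image] at hb
      obtain ⟨m, _, hm⟩ := hb
      rw [← hm]
      exact hDecMX m.val m.2 _
    · rw [Finset.card_image_of_injective _ hinj2, Finset.card_attach, hDec2 E]
  exact ⟨hcapineq, hmapDfam⟩

end Nodes

section Nodes2
variable {le₁ : α → α → Prop} {le₂ : β → β → Prop}

def IsNode (le₁ : α → α → Prop) (le₂ : β → β → Prop) (n : ℕ)
    (ψ : ↥(Aset le₁ n) ≃ ↥(Aset le₂ n)) : Prop :=
  (∀ x y : ↥(Aset le₁ n), le₁ x.val y.val ↔ le₂ (ψ x).val (ψ y).val) ∧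
  (∀ x : ↥(Aset le₁ n), lvl le₂ (ψ x).val = lvl le₁ x.val) ∧
  (∀ E ∈ Dfam le₁ n, capped n (MX le₁ E) = capped n (MX le₂ (mapSet ψ E)))

theorem mapSet_comp {γ : Type} {A : Set α} {B : Set β} {C : Set γ}
    (ψ : A → B) (ψ' : B → C) (E : Set α) :
    mapSet (fun x => ψ' (ψ x)) E = mapSet ψ' (mapSet ψ E) := by
  ext c
  constructor
  · rintro ⟨x, hx, rfl⟩
    exact ⟨ψ x, ⟨x, hx, rfl⟩, rfl⟩
  · rintro ⟨y, ⟨x, hx, hxy⟩, rfl⟩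
    refine ⟨x, hx, ?_⟩
    show (ψ' (ψ x)).val = (ψ' y).val
    have h2 : ψ x = y := Subtype.ext hxy
    rw [h2]

theorem mapSet_injOn {A : Set α} {B : Set β} {ψ : A → B} (hψ : Function.Injective ψ)
    {E E' : Set α} (hE : E ⊆ A) (hE' : E' ⊆ A) (h : mapSet ψ E = mapSet ψ E') : E = E' := by
  have key : ∀ (F F' : Set α), F ⊆ A → mapSet ψ F = mapSet ψ F' → F ⊆ F' := by
    intro F F' hF hFF z hz
    have : (ψ ⟨z, hF hz⟩).val ∈ mapSet ψ F := ⟨⟨z, hF hz⟩, hz, rfl⟩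
    rw [hFF] at this
    obtain ⟨x', hx', hval⟩ := this
    have : x' = ⟨z, hF hz⟩ := hψ (Subtype.ext hval)
    rw [this] at hx'
    exact hx'
  exact Set.Subset.antisymm (key E E' hE h) (key E' E hE' h.symm)

theorem node_exists (hpo₁ : IsPartialOrder α le₁) (hpo₂ : IsPartialOrder β le₂)
    (hpf₁ : PastFinite le₁) (hpf₂ : PastFinite le₂) (hss : SameStems le₁ le₂) {n : ℕ}
    (hA : (Aset le₁ n).Finite) (hB : (Aset le₂ n).Finite)
    (hcard : (Aset le₁ n).ncard = (Aset le₂ n).ncard) :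
    ∃ ψ : ↥(Aset le₁ n) ≃ ↥(Aset le₂ n), IsNode le₁ le₂ n ψ := by
  classical
  obtain ⟨Ψ, hiso, hlvl, hcap⟩ := half_node hpo₁ hpo₂ hpf₁ hpf₂ hss hA hB hcard
  obtain ⟨Ψ', hiso', hlvl', hcap'⟩ := half_node hpo₂ hpo₁ hpf₂ hpf₁
    (fun m s => (hss m s).symm) hB hA hcard.symm
  set σmap : Set α → Set α := fun E => mapSet (fun x => Ψ' (Ψ x)) E with hσdef
  have hσeq : ∀ E : Set α, σmap E = mapSet Ψ' (mapSet Ψ E) := fun E => mapSet_comp _ _ E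
  set c : Set α → ℕ := fun E => capped n (MX le₁ E) with hcdef
  have hstep : ∀ E ∈ Dfam le₁ n, (c E ≤ capped n (MX le₂ (mapSet Ψ E)) ∧
      capped n (MX le₂ (mapSet Ψ E)) ≤ c (σmap E)) ∧ σmap E ∈ Dfam le₁ n := by
    intro E hE
    obtain ⟨h1, h2⟩ := hcap E hE
    obtain ⟨h3, h4⟩ := hcap' (mapSet Ψ E) h2
    rw [← hσeq E] at h3 h4
    exact ⟨⟨h1, h3⟩, h4⟩
  -- sum argument
  have hDfin : (Dfam le₁ n).Finite := dfam_finite hA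
  have hinjOn : ∀ E ∈ Dfam le₁ n, ∀ E' ∈ Dfam le₁ n, σmap E = σmap E' → E = E' := by
    intro E hE E' hE' h
    refine mapSet_injOn ?_ (dfam_subset_aset hE) (dfam_subset_aset hE') h
    intro x y hxy
    exact Ψ.injective (Ψ'.injective hxy)
  have himg : hDfin.toFinset.image σmap = hDfin.toFinset := by
    apply Finset.eq_of_subset_of_card_le
    · intro E hE
      obtain ⟨E', hE', rfl⟩ := Finset.mem_image.mp hE
      rw [Set.Finite.mem_toFinset] at hE' ⊢
      exact (hstep E' hE').2
    · rw [Finset.card_image_of_injOn]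
      intro E hE E' hE' h
      simp only [Finset.mem_coe, Set.Finite.mem_toFinset] at hE hE'
      exact hinjOn E hE E' hE' h
  have hinj' : ∀ E ∈ hDfin.toFinset, ∀ E' ∈ hDfin.toFinset, σmap E = σmap E' → E = E' := by
    intro E hE E' hE' h
    rw [Set.Finite.mem_toFinset] at hE hE'
    exact hinjOn E hE E' hE' h
  have hsum : ∑ E ∈ hDfin.toFinset.image σmap, c E = ∑ E ∈ hDfin.toFinset, c (σmap E) :=
    Finset.sum_image hinj'
  rw [himg] at hsum
  have hpoint : ∀ E ∈ hDfin.toFinset, c E = c (σmap E) := by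
    have hle : ∀ E ∈ hDfin.toFinset, c E ≤ c (σmap E) := by
      intro E hE
      rw [Set.Finite.mem_toFinset] at hE
      obtain ⟨⟨h1, h2⟩, _⟩ := hstep E hE
      omega
    intro E hE
    by_contra hne
    have hlt : c E < c (σmap E) := lt_of_le_of_ne (hle E hE) hne
    have hstrict : ∑ E ∈ hDfin.toFinset, c E < ∑ E ∈ hDfin.toFinset, c (σmap E) :=
      Finset.sum_lt_sum hle ⟨E, hE, hlt⟩
    rw [hsum] at hstrict
    exact lt_irrefl _ hstrict
  refine ⟨Ψ, hiso, hlvl, ?_⟩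
  intro E hE
  obtain ⟨⟨h1, h2⟩, _⟩ := hstep E hE
  have h3 := hpoint E (Set.Finite.mem_toFinset hDfin |>.mpr hE)
  simp only [hcdef] at h1 h2 h3
  omega

theorem aset_mono (le : α → α → Prop) {m n : ℕ} (h : m ≤ n) : Aset le m ⊆ Aset le n :=
  fun x hx => ⟨hx.1, le_trans hx.2 h⟩

theorem node_restrict (hpo₁ : IsPartialOrder α le₁) (hpo₂ : IsPartialOrder β le₂) {n : ℕ}
    {ψ : ↥(Aset le₁ (n+1)) ≃ ↥(Aset le₂ (n+1))} (hψ : IsNode le₁ le₂ (n+1) ψ) :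
    ∃ ψ' : ↥(Aset le₁ n) ≃ ↥(Aset le₂ n), IsNode le₁ le₂ n ψ' ∧
      ∀ x : ↥(Aset le₁ n), (ψ' x).val = (ψ ⟨x.val, aset_mono le₁ (Nat.le_succ n) x.2⟩).val := by
  classical
  obtain ⟨hiso, hlvl, hcap⟩ := hψ
  have hlvl' : ∀ y : ↥(Aset le₂ (n+1)), lvl le₁ (ψ.symm y).val = lvl le₂ y.val := by
    intro y
    have := hlvl (ψ.symm y)
    rw [ψ.apply_symm_apply] at this
    exact this.symm
  set F : ↥(Aset le₁ n) → ↥(Aset le₂ n) := fun x =>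
    ⟨(ψ ⟨x.val, aset_mono le₁ (Nat.le_succ n) x.2⟩).val,
      (ψ _).2.1, by rw [hlvl]; exact x.2.2⟩ with hF
  set G : ↥(Aset le₂ n) → ↥(Aset le₁ n) := fun y =>
    ⟨(ψ.symm ⟨y.val, aset_mono le₂ (Nat.le_succ n) y.2⟩).val,
      (ψ.symm _).2.1, by rw [hlvl']; exact y.2.2⟩ with hG
  have hFG : ∀ x, G (F x) = x := by
    intro x
    apply Subtype.ext
    show (ψ.symm ⟨(ψ ⟨x.val, _⟩).val, _⟩).val = x.val
    have : (⟨(ψ ⟨x.val, aset_mono le₁ (Nat.le_succ n) x.2⟩).val, _⟩ : ↥(Aset le₂ (n+1))) =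
        ψ ⟨x.val, aset_mono le₁ (Nat.le_succ n) x.2⟩ := Subtype.ext rfl
    rw [this, ψ.symm_apply_apply]
  have hGF : ∀ y, F (G y) = y := by
    intro y
    apply Subtype.ext
    show (ψ ⟨(ψ.symm ⟨y.val, _⟩).val, _⟩).val = y.val
    have : (⟨(ψ.symm ⟨y.val, aset_mono le₂ (Nat.le_succ n) y.2⟩).val, _⟩ : ↥(Aset le₁ (n+1))) =
        ψ.symm ⟨y.val, aset_mono le₂ (Nat.le_succ n) y.2⟩ := Subtype.ext rfl
    rw [this, ψ.apply_symm_apply]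
  set ψ' : ↥(Aset le₁ n) ≃ ↥(Aset le₂ n) := ⟨F, G, hFG, hGF⟩ with hψ'
  have hψ'val : ∀ x : ↥(Aset le₁ n),
      (ψ' x).val = (ψ ⟨x.val, aset_mono le₁ (Nat.le_succ n) x.2⟩).val := fun x => rfl
  refine ⟨ψ', ⟨?_, ?_, ?_⟩, hψ'val⟩
  · intro x y
    rw [hψ'val, hψ'val]
    exact hiso ⟨x.val, aset_mono le₁ (Nat.le_succ n) x.2⟩ ⟨y.val, aset_mono le₁ (Nat.le_succ n) y.2⟩
  · intro x
    rw [hψ'val]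
    exact hlvl ⟨x.val, aset_mono le₁ (Nat.le_succ n) x.2⟩
  · intro E hE
    have hE' : E ∈ Dfam le₁ (n+1) := by
      refine ⟨hE.1, ?_⟩
      intro z hz
      obtain ⟨h1, h2⟩ := hE.2 z hz
      exact ⟨h1, by omega⟩
    have hmapeq : mapSet ψ' E = mapSet ψ E := by
      ext b
      constructor
      · rintro ⟨x, hx, rfl⟩
        exact ⟨⟨x.val, aset_mono le₁ (Nat.le_succ n) x.2⟩, hx, (hψ'val x).symm⟩
      · rintro ⟨x, hx, rfl⟩
        have hxn : x.val ∈ Aset le₁ n := by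
          obtain ⟨h1, h2⟩ := hE.2 x.val hx
          exact ⟨h1, by omega⟩
        refine ⟨⟨x.val, hxn⟩, hx, ?_⟩
        rw [hψ'val]
    rw [hmapeq, capped_min (Nat.le_succ n) (MX le₁ E),
      capped_min (Nat.le_succ n) (MX le₂ (mapSet ψ E)), hcap E hE']

end Nodes2

section Branch
variable {le₁ : α → α → Prop} {le₂ : β → β → Prop}

theorem nonmax_downClosed (hpo : IsPartialOrder α le₁) :
    DownClosed le₁ {x : α | ¬ IsMaximalRel le₁ x} := by
  intro x y hxy hy
  obtain ⟨z, hz⟩ := not_max_iff.mp hy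
  exact not_max_of_ltrel (le_trans_ltrel hpo hxy hz)

theorem branch_exists (hpo₁ : IsPartialOrder α le₁) (hpo₂ : IsPartialOrder β le₂)
    (hpf₁ : PastFinite le₁) (hpf₂ : PastFinite le₂) (hss : SameStems le₁ le₂)
    (hfin₁ : ∀ k, {x : α | ¬ IsMaximalRel le₁ x ∧ lvl le₁ x = k}.Finite) :
    ∃ Φ : ∀ n, ↥(Aset le₁ n) ≃ ↥(Aset le₂ n), (∀ n, IsNode le₁ le₂ n (Φ n)) ∧
      ∀ (n : ℕ) (x : ↥(Aset le₁ n)),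
        ((Φ n) x).val = ((Φ (n+1)) ⟨x.val, aset_mono le₁ (Nat.le_succ n) x.2⟩).val := by
  classical
  have hfin₂ := level_finite_transfer hpo₁ hpo₂ hpf₁ hpf₂ hss hfin₁
  have hA : ∀ n, (Aset le₁ n).Finite := aset_finite hfin₁
  have hB : ∀ n, (Aset le₂ n).Finite := aset_finite hfin₂
  have hcard := aset_card_eq hpo₁ hpo₂ hpf₁ hpf₂ hss hfin₁
  set N : ℕ → Type := fun n => {ψ : ↥(Aset le₁ n) ≃ ↥(Aset le₂ n) // IsNode le₁ le₂ n ψ}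
    with hN
  haveI hNfin : ∀ n, Finite (N n) := by
    intro n
    haveI := (hA n).to_subtype
    haveI := (hB n).to_subtype
    have hEq : Finite (↥(Aset le₁ n) ≃ ↥(Aset le₂ n)) :=
      Finite.of_injective (fun e => (e : ↥(Aset le₁ n) → ↥(Aset le₂ n)))
        (fun e₁ e₂ h => Equiv.coe_fn_injective h)
    exact Subtype.finite
  have hNne : ∀ n, Nonempty (N n) := by
    intro n
    obtain ⟨ψ, hψ⟩ := node_exists hpo₁ hpo₂ hpf₁ hpf₂ hss (hA n) (hB n) (hcard n)
    exact ⟨⟨ψ, hψ⟩⟩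
  set r : ∀ n, N (n+1) → N n := fun n p =>
    ⟨(node_restrict hpo₁ hpo₂ p.2).choose, (node_restrict hpo₁ hpo₂ p.2).choose_spec.1⟩
    with hr
  obtain ⟨x, hx⟩ := konig hNne r
  refine ⟨fun n => (x n).val, fun n => (x n).2, ?_⟩
  intro n v
  have h1 : (x n).val = (node_restrict hpo₁ hpo₂ (x (n+1)).2).choose := by
    rw [← hx n]
  show (((x n).val) v).val = (((x (n+1)).val) ⟨v.val, aset_mono le₁ (Nat.le_succ n) v.2⟩).val
  rw [h1]
  exact (node_restrict hpo₁ hpo₂ (x (n+1)).2).choose_spec.2 v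

theorem rigidity_core (hpo₁ : IsPartialOrder α le₁) (hpo₂ : IsPartialOrder β le₂)
    (hpf₁ : PastFinite le₁) (hpf₂ : PastFinite le₂) (hss : SameStems le₁ le₂)
    (hfin₁ : ∀ k, {x : α | ¬ IsMaximalRel le₁ x ∧ lvl le₁ x = k}.Finite) :
    ∃ e : ↥{x : α | ¬ IsMaximalRel le₁ x} ≃ ↥{y : β | ¬ IsMaximalRel le₂ y},
      (∀ v w : ↥{x : α | ¬ IsMaximalRel le₁ x}, le₁ v.val w.val ↔ le₂ (e v).val (e w).val) ∧
      ∀ E : Set α, E.Finite → DownClosed le₁ E → (∀ z ∈ E, ¬ IsMaximalRel le₁ z) →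
        ∀ n', capped n' (MX le₁ E) = capped n' (MX le₂ (mapSet (⇑e) E)) := by
  classical
  obtain ⟨Φ, hnode, hcompat⟩ := branch_exists hpo₁ hpo₂ hpf₁ hpf₂ hss hfin₁
  -- stability of values across stages
  have hstab : ∀ (m n : ℕ) (h : m ≤ n) (v : α) (hv : v ∈ Aset le₁ m),
      ((Φ m) ⟨v, hv⟩).val = ((Φ n) ⟨v, aset_mono le₁ h hv⟩).val := by
    intro m n h
    induction h with
    | refl => intro v hv; rfl
    | @step n hmn ih =>
      intro v hv
      rw [ih v hv]
      exact hcompat n ⟨v, aset_mono le₁ hmn hv⟩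
  set Cm₁ : Set α := {x : α | ¬ IsMaximalRel le₁ x} with hCm₁
  set Cm₂ : Set β := {y : β | ¬ IsMaximalRel le₂ y} with hCm₂
  have hmemA : ∀ v : ↥Cm₁, v.val ∈ Aset le₁ (lvl le₁ v.val) := fun v => ⟨v.2, le_rfl⟩
  set F₀ : ↥Cm₁ → β := fun v => ((Φ (lvl le₁ v.val)) ⟨v.val, hmemA v⟩).val with hF₀
  have hF₀n : ∀ (v : ↥Cm₁) (n : ℕ) (hv : v.val ∈ Aset le₁ n),
      F₀ v = ((Φ n) ⟨v.val, hv⟩).val := by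
    intro v n hv
    have h := hstab (lvl le₁ v.val) n hv.2 v.val (hmemA v)
    rw [hF₀]
    simp only []
    rw [h]
  have hmem₂ : ∀ v : ↥Cm₁, F₀ v ∈ Cm₂ := by
    intro v
    exact ((Φ (lvl le₁ v.val)) ⟨v.val, hmemA v⟩).2.1
  set F : ↥Cm₁ → ↥Cm₂ := fun v => ⟨F₀ v, hmem₂ v⟩ with hF
  have hFinj : Function.Injective F := by
    intro v w hvw
    rw [Subtype.mk.injEq] at hvw
    set n := max (lvl le₁ v.val) (lvl le₁ w.val) with hn
    have hv : v.val ∈ Aset le₁ n := ⟨v.2, le_max_left _ _⟩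
    have hw : w.val ∈ Aset le₁ n := ⟨w.2, le_max_right _ _⟩
    rw [hF₀n v n hv, hF₀n w n hw] at hvw
    have := (Φ n).injective (Subtype.ext hvw)
    rw [Subtype.mk.injEq] at this
    exact Subtype.ext this
  have hFsurj : Function.Surjective F := by
    intro y
    have hy : y.val ∈ Aset le₂ (lvl le₂ y.val) := ⟨y.2, le_rfl⟩
    obtain ⟨u, hu⟩ := (Φ (lvl le₂ y.val)).surjective ⟨y.val, hy⟩
    refine ⟨⟨u.val, u.2.1⟩, ?_⟩
    apply Subtype.ext
    show F₀ _ = y.val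
    rw [hF₀n ⟨u.val, u.2.1⟩ (lvl le₂ y.val) u.2]
    have : (⟨u.val, u.2⟩ : ↥(Aset le₁ (lvl le₂ y.val))) = u := Subtype.ext rfl
    rw [this, hu]
  set e : ↥Cm₁ ≃ ↥Cm₂ := Equiv.ofBijective F ⟨hFinj, hFsurj⟩ with he
  have heval : ∀ v : ↥Cm₁, (e v).val = F₀ v := fun v => rfl
  have hiso : ∀ v w : ↥Cm₁, le₁ v.val w.val ↔ le₂ (e v).val (e w).val := by
    intro v w
    set n := max (lvl le₁ v.val) (lvl le₁ w.val) with hn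
    have hv : v.val ∈ Aset le₁ n := ⟨v.2, le_max_left _ _⟩
    have hw : w.val ∈ Aset le₁ n := ⟨w.2, le_max_right _ _⟩
    rw [heval, heval, hF₀n v n hv, hF₀n w n hw]
    exact (hnode n).1 ⟨v.val, hv⟩ ⟨w.val, hw⟩
  refine ⟨e, hiso, ?_⟩
  intro E hEfin hEdc hEnm n'
  -- bound the levels of E
  set L := hEfin.toFinset.sup (lvl le₁) with hL
  have hLlt : ∀ z ∈ E, lvl le₁ z < L + 1 := by
    intro z hz
    have : lvl le₁ z ≤ L := Finset.le_sup (hEfin.mem_toFinset.mpr hz)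
    omega
  set n := max n' (L + 1) with hn
  have hED : E ∈ Dfam le₁ n := by
    refine ⟨hEdc, ?_⟩
    intro z hz
    have := hLlt z hz
    exact ⟨hEnm z hz, by omega⟩
  have hmapeq : mapSet (⇑e) E = mapSet (⇑(Φ n)) E := by
    ext b
    constructor
    · rintro ⟨v, hv, rfl⟩
      have hvA : v.val ∈ Aset le₁ n := ⟨v.2, by have := hLlt v.val hv; omega⟩
      refine ⟨⟨v.val, hvA⟩, hv, ?_⟩
      rw [heval, hF₀n v n hvA]
    · rintro ⟨u, hu, rfl⟩
      refine ⟨⟨u.val, u.2.1⟩, hu, ?_⟩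
      rw [heval, hF₀n ⟨u.val, u.2.1⟩ n u.2]
  have hcapn := (hnode n).2.2 E hED
  rw [hmapeq, capped_min (le_max_left n' (L+1)) (MX le₁ E),
    capped_min (le_max_left n' (L+1)) (MX le₂ (mapSet (⇑(Φ n)) E)), hcapn]

end Branch

section Assembly

theorem equiv_of_capped_eq {γ δ : Type} [Countable γ] [Countable δ] {s : Set γ} {t : Set δ}
    (h : ∀ n, capped n s = capped n t) : Nonempty (↥s ≃ ↥t) := by
  classical
  by_cases hs : s.Finite
  · have ht : t.Finite := by
      by_contra hti
      have h1 := h (hs.toFinset.card + 1)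
      unfold capped at h1
      rw [dif_pos hs, dif_neg hti] at h1
      omega
    have hcards : hs.toFinset.card = ht.toFinset.card := by
      have h1 := h (hs.toFinset.card + ht.toFinset.card + 1)
      unfold capped at h1
      rw [dif_pos hs, dif_pos ht] at h1
      omega
    haveI := hs.fintype
    haveI := ht.fintype
    refine ⟨Fintype.equivOfCardEq ?_⟩
    rw [← hs.card_toFinset, ← ht.card_toFinset, hcards]
  · have ht : ¬ t.Finite := by
      intro hti
      have h1 := h (hti.toFinset.card + 1)
      unfold capped at h1
      rw [dif_neg hs, dif_pos hti] at h1
      omega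
    haveI h1 : Infinite ↥s := Set.infinite_coe_iff.mpr hs
    haveI h2 : Infinite ↥t := Set.infinite_coe_iff.mpr ht
    obtain ⟨d1⟩ := (nonempty_denumerable_iff (α := ↥s)).mpr ⟨inferInstance, inferInstance⟩
    obtain ⟨d2⟩ := (nonempty_denumerable_iff (α := ↥t)).mpr ⟨inferInstance, inferInstance⟩
    exact ⟨(@Denumerable.eqv _ d1).trans (@Denumerable.eqv _ d2).symm⟩

theorem fiberwise_equiv {γ δ I : Type} (f : γ → I) (g : δ → I)
    (h : ∀ i, Nonempty ({x : γ // f x = i} ≃ {y : δ // g y = i})) :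
    ∃ e : γ ≃ δ, ∀ x, g (e x) = f x := by
  classical
  have hch : ∀ i, {x : γ // f x = i} ≃ {y : δ // g y = i} := fun i => (h i).some
  refine ⟨((Equiv.sigmaFiberEquiv f).symm.trans
    ((Equiv.sigmaCongrRight hch).trans (Equiv.sigmaFiberEquiv g))), ?_⟩
  intro x
  exact (hch (f x) ⟨x, rfl⟩).2

variable {le₁ : α → α → Prop} {le₂ : β → β → Prop}

theorem mapSet_finite {A : Set α} {B : Set β} (ψ : A → B) {E : Set α} (hE : E.Finite) :
    (mapSet ψ E).Finite := by
  have hsub : mapSet ψ E ⊆ (fun x : A => (ψ x).val) '' (Subtype.val ⁻¹' E) := by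
    rintro b ⟨x, hx, rfl⟩
    exact ⟨x, hx, rfl⟩
  exact Set.Finite.subset (Set.Finite.image _ (hE.preimage Subtype.val_injective.injOn)) hsub

theorem mapSet_roundtrip₁ {A : Set α} {B : Set β} (ψ : A ≃ B) {E : Set α} (hE : E ⊆ A) :
    mapSet (⇑ψ.symm) (mapSet (⇑ψ) E) = E := by
  ext a
  constructor
  · rintro ⟨v, ⟨u, hu, huv⟩, rfl⟩
    have : ψ u = v := Subtype.ext huv
    rw [← this, ψ.symm_apply_apply]
    exact hu
  · intro ha
    refine ⟨ψ ⟨a, hE ha⟩, ⟨⟨a, hE ha⟩, ha, rfl⟩, ?_⟩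
    rw [ψ.symm_apply_apply]

theorem mapSet_roundtrip₂ {A : Set α} {B : Set β} (ψ : A ≃ B) {E' : Set β} (hE' : E' ⊆ B) :
    mapSet (⇑ψ) (mapSet (⇑ψ.symm) E') = E' := by
  ext b
  constructor
  · rintro ⟨v, ⟨u, hu, huv⟩, rfl⟩
    have : ψ.symm u = v := Subtype.ext huv
    rw [← this, ψ.apply_symm_apply]
    exact hu
  · intro hb
    refine ⟨ψ.symm ⟨b, hE' hb⟩, ⟨⟨b, hE' hb⟩, hb, rfl⟩, ?_⟩
    rw [ψ.apply_symm_apply]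

end Assembly

section Rigidity
variable {le₁ : α → α → Prop} {le₂ : β → β → Prop}

theorem rigidity (hpo₁ : IsPartialOrder α le₁) (hpo₂ : IsPartialOrder β le₂)
    (hc₁ : Countable α) (hc₂ : Countable β)
    (hpf₁ : PastFinite le₁) (hpf₂ : PastFinite le₂) (hss : SameStems le₁ le₂)
    (hfin₁ : ∀ k, {x : α | ¬ IsMaximalRel le₁ x ∧ lvl le₁ x = k}.Finite) :
    OrderIsoRel le₁ le₂ := by
  classical
  obtain ⟨e, hiso, hcap⟩ := rigidity_core hpo₁ hpo₂ hpf₁ hpf₂ hss hfin₁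
  -- strict pasts are always "good"
  have hgood₁ : ∀ a : α, (spast le₁ a).Finite ∧ DownClosed le₁ (spast le₁ a) ∧
      ∀ z ∈ spast le₁ a, ¬ IsMaximalRel le₁ z := by
    intro a
    refine ⟨(hpf₁ a).subset (fun z hz => hz.1), ?_, fun z hz => not_max_of_ltrel hz⟩
    intro u v huv hv
    exact le_trans_ltrel hpo₁ huv hv
  have hsp₂sub : ∀ b : β, spast le₂ b ⊆ {y : β | ¬ IsMaximalRel le₂ y} :=
    fun b z hz => not_max_of_ltrel hz
  have hsp₂dc : ∀ b : β, DownClosed le₂ (spast le₂ b) := by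
    intro b u v huv hv
    exact le_trans_ltrel hpo₂ huv hv
  -- down-closedness transfers backwards
  have hmapdc : ∀ {E' : Set β}, DownClosed le₂ E' → E' ⊆ {y : β | ¬ IsMaximalRel le₂ y} →
      DownClosed le₁ (mapSet (⇑e.symm) E') := by
    intro E' hdc hsub
    rintro a a' haa' ⟨u, hu, rfl⟩
    rcases eq_or_ne a (e.symm u).val with heq | hne
    · exact heq ▸ ⟨u, hu, rfl⟩
    · have hanm : ¬ IsMaximalRel le₁ a := not_max_of_ltrel ⟨haa', hne⟩
      set v : ↥{x : α | ¬ IsMaximalRel le₁ x} := ⟨a, hanm⟩ with hv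
      have hle : le₂ (e v).val (e (e.symm u)).val := (hiso v (e.symm u)).mp haa'
      rw [Equiv.apply_symm_apply] at hle
      refine ⟨e v, hdc hle hu, ?_⟩
      rw [Equiv.symm_apply_apply]
  -- goodness of the pulled-back strict pasts
  have hgoodpull : ∀ b : β, (mapSet (⇑e.symm) (spast le₂ b)).Finite ∧
      DownClosed le₁ (mapSet (⇑e.symm) (spast le₂ b)) ∧
      ∀ z ∈ mapSet (⇑e.symm) (spast le₂ b), ¬ IsMaximalRel le₁ z := by
    intro b
    refine ⟨mapSet_finite _ ((hpf₂ b).subset (fun z hz => hz.1)),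
      hmapdc (hsp₂dc b) (hsp₂sub b), ?_⟩
    rintro z ⟨u, hu, rfl⟩
    exact (e.symm u).2
  -- index maps on the maximal parts
  set Mx₁ : Set α := {a : α | IsMaximalRel le₁ a} with hMx₁
  set Mx₂ : Set β := {b : β | IsMaximalRel le₂ b} with hMx₂
  set f : ↥Mx₁ → Set α := fun m => spast le₁ m.val with hfdef
  set g : ↥Mx₂ → Set α := fun m => mapSet (⇑e.symm) (spast le₂ m.val) with hgdef
  -- the fibers match
  have hfibers : ∀ i : Set α, Nonempty ({m : ↥Mx₁ // f m = i} ≃ {m : ↥Mx₂ // g m = i}) := by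
    intro i
    by_cases hgood : i.Finite ∧ DownClosed le₁ i ∧ ∀ z ∈ i, ¬ IsMaximalRel le₁ z
    · obtain ⟨hg1, hg2, hg3⟩ := hgood
      have hiCm : i ⊆ {x : α | ¬ IsMaximalRel le₁ x} := hg3
      -- f-fiber is MX le₁ i
      set q₁ : {m : ↥Mx₁ // f m = i} ≃ ↥(MX le₁ i) :=
        ⟨fun p => ⟨p.val.val, p.val.2, p.2⟩,
         fun m => ⟨⟨m.val, m.2.1⟩, m.2.2⟩,
         fun p => by apply Subtype.ext; apply Subtype.ext; rfl,
         fun m => by apply Subtype.ext; rfl⟩ with hq₁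
      -- g-fiber is MX le₂ (mapSet e i)
      have hfwd : ∀ p : {m : ↥Mx₂ // g m = i}, p.val.val ∈ MX le₂ (mapSet (⇑e) i) := by
        intro p
        refine ⟨p.val.2, ?_⟩
        have h1 : mapSet (⇑e) (mapSet (⇑e.symm) (spast le₂ p.val.val)) =
            spast le₂ p.val.val := mapSet_roundtrip₂ e (hsp₂sub p.val.val)
        rw [← h1]
        have h2 : mapSet (⇑e.symm) (spast le₂ p.val.val) = i := p.2
        rw [h2]
      have hbwd : ∀ m : ↥(MX le₂ (mapSet (⇑e) i)), mapSet (⇑e.symm) (spast le₂ m.val) = i := by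
        intro m
        rw [m.2.2, mapSet_roundtrip₁ e hiCm]
      set q₂ : {m : ↥Mx₂ // g m = i} ≃ ↥(MX le₂ (mapSet (⇑e) i)) :=
        ⟨fun p => ⟨p.val.val, hfwd p⟩,
         fun m => ⟨⟨m.val, m.2.1⟩, hbwd m⟩,
         fun p => by apply Subtype.ext; apply Subtype.ext; rfl,
         fun m => by apply Subtype.ext; rfl⟩ with hq₂
      obtain ⟨χ⟩ := equiv_of_capped_eq (fun n => hcap i hg1 hg2 hg3 n)
      exact ⟨q₁.trans (χ.trans q₂.symm)⟩
    · haveI h1 : IsEmpty {m : ↥Mx₁ // f m = i} := by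
        refine ⟨fun p => hgood ?_⟩
        rw [← p.2]
        exact hgood₁ p.val.val
      haveI h2 : IsEmpty {m : ↥Mx₂ // g m = i} := by
        refine ⟨fun p => hgood ?_⟩
        rw [← p.2]
        exact hgoodpull p.val.val
      exact ⟨Equiv.equivOfIsEmpty _ _⟩
  obtain ⟨h, hidx⟩ := fiberwise_equiv f g hfibers
  -- spast of images of maximal elements
  have hsp : ∀ m : ↥Mx₁, spast le₂ (h m).val = mapSet (⇑e) (spast le₁ m.val) := by
    intro m
    have h1 : mapSet (⇑e) (mapSet (⇑e.symm) (spast le₂ (h m).val)) = spast le₂ (h m).val :=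
      mapSet_roundtrip₂ e (hsp₂sub (h m).val)
    rw [← h1]
    have h2 : g (h m) = f m := hidx m
    rw [hgdef] at h2
    simp only [] at h2
    rw [h2]
  -- the global bijection
  set F : α → β := fun a =>
    if ha : IsMaximalRel le₁ a then (h ⟨a, ha⟩).val else (e ⟨a, ha⟩).val with hFdef
  set G : β → α := fun b =>
    if hb : IsMaximalRel le₂ b then (h.symm ⟨b, hb⟩).val else (e.symm ⟨b, hb⟩).val with hGdef
  have hFmax : ∀ (a : α) (ha : IsMaximalRel le₁ a), F a = (h ⟨a, ha⟩).val := by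
    intro a ha
    rw [hFdef]
    simp only [dif_pos ha]
  have hFnmax : ∀ (a : α) (ha : ¬ IsMaximalRel le₁ a), F a = (e ⟨a, ha⟩).val := by
    intro a ha
    rw [hFdef]
    simp only [dif_neg ha]
  have hGmax : ∀ (b : β) (hb : IsMaximalRel le₂ b), G b = (h.symm ⟨b, hb⟩).val := by
    intro b hb
    rw [hGdef]
    simp only [dif_pos hb]
  have hGnmax : ∀ (b : β) (hb : ¬ IsMaximalRel le₂ b), G b = (e.symm ⟨b, hb⟩).val := by
    intro b hb
    rw [hGdef]
    simp only [dif_neg hb]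
  have hleft : ∀ a, G (F a) = a := by
    intro a
    by_cases ha : IsMaximalRel le₁ a
    · rw [hFmax a ha, hGmax _ (h ⟨a, ha⟩).2]
      have : (⟨(h ⟨a, ha⟩).val, (h ⟨a, ha⟩).2⟩ : ↥Mx₂) = h ⟨a, ha⟩ := Subtype.ext rfl
      rw [this, Equiv.symm_apply_apply]
    · rw [hFnmax a ha, hGnmax _ (e ⟨a, ha⟩).2]
      have : (⟨(e ⟨a, ha⟩).val, (e ⟨a, ha⟩).2⟩ :
          ↥{y : β | ¬ IsMaximalRel le₂ y}) = e ⟨a, ha⟩ := Subtype.ext rfl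
      rw [this, Equiv.symm_apply_apply]
  have hright : ∀ b, F (G b) = b := by
    intro b
    by_cases hb : IsMaximalRel le₂ b
    · rw [hGmax b hb, hFmax _ (h.symm ⟨b, hb⟩).2]
      have : (⟨(h.symm ⟨b, hb⟩).val, (h.symm ⟨b, hb⟩).2⟩ : ↥Mx₁) = h.symm ⟨b, hb⟩ :=
        Subtype.ext rfl
      rw [this, Equiv.apply_symm_apply]
    · rw [hGnmax b hb, hFnmax _ (e.symm ⟨b, hb⟩).2]
      have : (⟨(e.symm ⟨b, hb⟩).val, (e.symm ⟨b, hb⟩).2⟩ :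
          ↥{x : α | ¬ IsMaximalRel le₁ x}) = e.symm ⟨b, hb⟩ := Subtype.ext rfl
      rw [this, Equiv.apply_symm_apply]
  refine ⟨⟨F, G, hleft, hright⟩, ?_⟩
  intro a b
  show le₁ a b ↔ le₂ (F a) (F b)
  by_cases ha : IsMaximalRel le₁ a <;> by_cases hb : IsMaximalRel le₁ b
  · -- both maximal
    rw [hFmax a ha, hFmax b hb]
    constructor
    · intro hab
      have hba : b = a := ha b hab
      have h2 : (⟨a, ha⟩ : ↥Mx₁) = ⟨b, hb⟩ := Subtype.ext hba.symm
      rw [h2]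
      exact lerefl hpo₂ _
    · intro hab
      have h1 : (h ⟨b, hb⟩).val = (h ⟨a, ha⟩).val := (h ⟨a, ha⟩).2 _ hab
      have h2 : (⟨a, ha⟩ : ↥Mx₁) = ⟨b, hb⟩ := h.injective (Subtype.ext h1.symm)
      rw [Subtype.mk.injEq] at h2
      rw [h2]
      exact lerefl hpo₁ b
  · -- a maximal, b not: both sides false
    rw [hFmax a ha, hFnmax b hb]
    constructor
    · intro hab
      exact absurd (ha b hab ▸ ha) hb
    · intro hab
      have h1 : (e ⟨b, hb⟩).val = (h ⟨a, ha⟩).val := (h ⟨a, ha⟩).2 _ hab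
      exact absurd (h1 ▸ (h ⟨a, ha⟩).2) (e ⟨b, hb⟩).2
  · -- a not maximal, b maximal
    rw [hFnmax a ha, hFmax b hb]
    constructor
    · intro hab
      have hne : a ≠ b := fun hc => ha (hc ▸ hb)
      have hmem : (e ⟨a, ha⟩).val ∈ mapSet (⇑e) (spast le₁ b) := ⟨⟨a, ha⟩, ⟨hab, hne⟩, rfl⟩
      rw [← hsp ⟨b, hb⟩] at hmem
      exact hmem.1
    · intro hab
      have hne : (e ⟨a, ha⟩).val ≠ (h ⟨b, hb⟩).val := by
        intro hc
        exact absurd (hc ▸ (h ⟨b, hb⟩).2) (e ⟨a, ha⟩).2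
      have hmem : (e ⟨a, ha⟩).val ∈ spast le₂ (h ⟨b, hb⟩).val := ⟨hab, hne⟩
      rw [hsp ⟨b, hb⟩] at hmem
      obtain ⟨v, hv, hval⟩ := hmem
      have : v = ⟨a, ha⟩ := e.injective (Subtype.ext hval)
      rw [this] at hv
      exact hv.1
  · -- both not maximal
    rw [hFnmax a ha, hFnmax b hb]
    exact hiso ⟨a, ha⟩ ⟨b, hb⟩

end Rigidity

end Rogue

/-- **Θ = Γ**: A countable past-finite partial order is rogue if and only if it has a
level containing infinitely many non-maximal elements. -/
theorem rogue_iff_infinite_nonmaximal_level (α : Type) (le : α → α → Prop)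
    (hpo : IsPartialOrder α le) (hc : Countable α) (hpf : PastFinite le) :
    IsRogueRel le ↔ ∃ k : ℕ, {x : α | HasLevel le x k ∧ ¬ IsMaximalRel le x}.Infinite := by
  constructor
  · intro hrogue
    by_contra hno
    push_neg at hno
    obtain ⟨β', le', hpo', hc', hpf', hni, hss⟩ := hrogue
    apply hni
    apply Rogue.rigidity hpo hpo' hc hc' hpf hpf' hss
    intro k
    have hfin : {x : α | HasLevel le x k ∧ ¬ IsMaximalRel le x}.Finite :=
      hno k
    have hset : {x : α | ¬ IsMaximalRel le x ∧ Rogue.lvl le x = k} =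
        {x : α | HasLevel le x k ∧ ¬ IsMaximalRel le x} := by
      ext x
      constructor
      · rintro ⟨h1, h2⟩
        exact ⟨(Rogue.hasLevel_iff_lvl hpo hpf).mpr h2, h1⟩
      · rintro ⟨h1, h2⟩
        exact ⟨h2, (Rogue.hasLevel_iff_lvl hpo hpf).mp h1⟩
    rw [hset]
    exact hfin
  · exact Rogue.easy_direction hpo hc hpf
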